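/- Let p be a prime, q = p^d, and let G ≤ AΓL(1,q) act 2-transitively on F_q. Let s be the smallest positive integer such that t(a,s) ∈ G_0 for some a ∈ F_q^×, m the smallest positive integer such that t(1,ms) ∈ G_0, and H := {a ∈ F_q^× : t(a,0) ∈ G_0}. Let ξ be a generator of F_q^× and ℓ a positive integer coprime to m such that {a ∈ F_q^× : t(a,s) ∈ G_0} = Hξ^ℓ. Then a subset P of F_q^× containing 1 is an imprimitive block of G_0 on F_q^× if and only if either P is a subgroup of F_q^×, or there exist an integer n ≥ 0, a divisor e of m and a subgroup K of H such that, setting φ := (z ↦ z^{p^s}), ψ := (z ↦ z^{p^{es}}), j := nm + ℓ[φ,e] and w := ξ^j, the index |H|/|K| divides j[ψ, m/e]/m and P = K ∪ w^{[ψ,1]}K ∪ w^{[ψ,2]}K ∪ ⋯ ∪ w^{[ψ, m/e − 1]}K. -/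

import Mathlib

namespace Stmt13

/-- geometric sum `1 + x + ... + x^(k-1)` -/
def gs (x k : ℕ) : ℕ := ∑ i ∈ Finset.range k, x ^ i

lemma gs_zero (x : ℕ) : gs x 0 = 0 := by simp [gs]

lemma gs_succ (x k : ℕ) : gs x (k + 1) = gs x k + x ^ k := by
  simp [gs, Finset.sum_range_succ]

lemma gs_one (x : ℕ) : gs x 1 = 1 := by simp [gs]

lemma gs_add (x a b : ℕ) : gs x (a + b) = gs x a + x ^ a * gs x b := by
  induction b with
  | zero => simp [gs_zero]
  | succ b ih =>
      rw [← Nat.add_assoc, gs_succ, gs_succ, ih, pow_add]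
      ring

lemma gs_succ' (x k : ℕ) : gs x (k + 1) = 1 + x * gs x k := by
  have := gs_add x 1 k
  simpa [gs_one, Nat.add_comm] using this

lemma gs_mul (x e i : ℕ) : gs x (e * i) = gs x e * gs (x ^ e) i := by
  induction i with
  | zero => simp [gs_zero]
  | succ i ih =>
      have : e * (i + 1) = e * i + e := by ring
      rw [this, gs_add, ih, gs_succ, ← pow_mul]
      ring

lemma gs_mono (x : ℕ) {a b : ℕ} (h : a ≤ b) : gs x a ≤ gs x b := by
  obtain ⟨c, rfl⟩ := Nat.exists_eq_add_of_le h
  rw [gs_add]; omega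

lemma pred_mul_gs (x k : ℕ) (hx : 1 ≤ x) : (x - 1) * gs x k = x ^ k - 1 := by
  induction k with
  | zero => simp [gs_zero]
  | succ k ih =>
      rw [gs_succ, Nat.mul_add, ih]
      have h1 : 1 ≤ x ^ k := Nat.one_le_pow _ _ hx
      have h2 : x ^ k ≤ x ^ (k+1) := Nat.pow_le_pow_right hx (by omega)
      have h3 : x ^ (k+1) = x ^ k * x := pow_succ x k
      have : (x - 1) * x ^ k = x ^ k * x - x ^ k := by
        rw [Nat.sub_mul, one_mul, Nat.mul_comm]
      omega

lemma gs_div (x k : ℕ) (hx : 2 ≤ x) : (x ^ k - 1) / (x - 1) = gs x k := by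
  rw [← pred_mul_gs x k (by omega), Nat.mul_div_cancel_left _ (by omega)]

/-- a - b ∣ a^n - b^n specialization: `x^m - 1 ∣ x^(m*t) - 1`. -/
lemma sub_one_dvd_pow_sub_one (x t : ℕ) : x - 1 ∣ x ^ t - 1 := by
  simpa using Nat.sub_dvd_pow_sub_pow x 1 t

section DivisorLemma

variable {Q : ℕ} {T : Set ℕ}

lemma mem_of_modEq (hQ : 0 < Q) (per : ∀ n, n + Q ∈ T ↔ n ∈ T)
    {a b : ℕ} (h : a ≡ b [MOD Q]) (ha : a ∈ T) : b ∈ T := by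
  -- reduce to: adding multiples of Q preserves membership
  have key : ∀ t n, n ∈ T ↔ n + Q * t ∈ T := by
    intro t
    induction t with
    | zero => simp
    | succ t ih =>
        intro n
        rw [ih n, Nat.mul_succ, ← Nat.add_assoc, per]
  rcases Nat.le_total a b with hab | hab
  · obtain ⟨c, hc⟩ := (Nat.modEq_iff_dvd' hab).mp h
    have : b = a + Q * c := by omega
    rw [this]; exact (key c a).mp ha
  · obtain ⟨c, hc⟩ := (Nat.modEq_iff_dvd' hab).mp h.symm
    have : a = b + Q * c := by omega
    rw [this] at ha; exact ((key c b).mpr ha)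

lemma exists_divisor (hQ : 0 < Q) (per : ∀ n, n + Q ∈ T ↔ n ∈ T)
    (h0 : 0 ∈ T) (hadd : ∀ a ∈ T, ∀ b ∈ T, a + b ∈ T)
    (hneg : ∀ a ∈ T, ∃ b ∈ T, Q ∣ a + b) :
    ∃ c, 0 < c ∧ c ∣ Q ∧ ∀ n, n ∈ T ↔ c ∣ n := by
  have hQT : Q ∈ T := by have := (per 0).mpr h0; simpa using this
  have hex : ∃ k, 0 < k ∧ k ∈ T := ⟨Q, hQ, hQT⟩
  classical
  set c := Nat.find hex with hc
  obtain ⟨hcpos, hcT⟩ : 0 < c ∧ c ∈ T := Nat.find_spec hex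
  have hmin : ∀ k, 0 < k → k ∈ T → c ≤ k := fun k h1 h2 =>
    Nat.find_le ⟨h1, h2⟩
  -- multiples of elements stay in T
  have hmul : ∀ a ∈ T, ∀ t : ℕ, a * t ∈ T := by
    intro a ha t
    induction t with
    | zero => simpa using h0
    | succ t ih => rw [Nat.mul_succ]; exact hadd _ ih _ ha
  have hdvd : ∀ n ∈ T, c ∣ n := by
    intro n hn
    obtain ⟨c', hc'T, w, hw⟩ : ∃ c' ∈ T, ∃ w, c + c' = Q * w := by
      obtain ⟨b, hb, hd⟩ := hneg c hcT
      exact ⟨b, hb, hd.choose, hd.choose_spec⟩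
    -- n + (n/c)*c' = n % c + (n/c) * (Q*w)
    have hmem : n + c' * (n / c) ∈ T := hadd _ hn _ (hmul _ hc'T _)
    have heq : n + c' * (n / c) = n % c + Q * (w * (n / c)) := by
      have h1 : n = n % c + c * (n / c) := by
        rw [Nat.add_comm, Nat.div_add_mod]
      calc n + c' * (n / c) = n % c + (c + c') * (n / c) := by
            rw [Nat.add_mul]; omega
        _ = n % c + Q * (w * (n / c)) := by rw [hw]; ring_nf
    rw [heq] at hmem
    have hmod : n % c ∈ T := by
      refine mem_of_modEq hQ per ?_ hmem
      have : n % c ≡ n % c + Q * (w * (n / c)) [MOD Q] :=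
        (Nat.modEq_iff_dvd' (Nat.le_add_right _ _)).mpr ⟨w * (n / c), by omega⟩
      exact this.symm
    have : n % c = 0 := by
      by_contra hne
      have := hmin _ (Nat.pos_of_ne_zero hne) hmod
      have := Nat.mod_lt n hcpos
      omega
    exact Nat.dvd_of_mod_eq_zero this
  refine ⟨c, hcpos, hdvd _ hQT, fun n => ⟨hdvd n, ?_⟩⟩
  rintro ⟨t, rfl⟩
  simpa [Nat.mul_comm] using hmul _ hcT t

end DivisorLemma
lemma coprime_of_pow_modEq_one (x D Q : ℕ) (hD : 0 < D) (h : x ^ D ≡ 1 [MOD Q]) :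
    Nat.Coprime x Q := by
  rcases Nat.eq_zero_or_pos x with rfl | hx
  · have h0 : (0:ℕ) ^ D = 0 := Nat.zero_pow hD
    rw [h0] at h
    have hQ1 : Q ∣ 1 := by simpa using (Nat.modEq_iff_dvd' (by omega)).mp h
    rw [Nat.dvd_one.mp hQ1]
    exact Nat.coprime_one_right 0
  · have h1 : 1 ≤ x ^ D := Nat.one_le_pow _ _ hx
    have hQd : Q ∣ x ^ D - 1 := (Nat.modEq_iff_dvd' h1).mp h.symm
    have hg1 : Nat.gcd x Q ∣ x ^ D := (Nat.gcd_dvd_left x Q).trans (dvd_pow_self x hD.ne')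
    have hg2 : Nat.gcd x Q ∣ x ^ D - 1 := (Nat.gcd_dvd_right x Q).trans hQd
    have hone : Nat.gcd x Q ∣ 1 := by
      have := Nat.dvd_sub hg1 hg2
      simpa [Nat.sub_sub_self h1] using this
    exact Nat.dvd_one.mp hone

lemma cong_iff (x m l : ℕ) (hcop : Nat.Coprime x m)
    (CONG : ∀ k, m ∣ l * gs x k ↔ m ∣ k) :
    ∀ a b, (a ≡ b [MOD m]) ↔ (l * gs x a ≡ l * gs x b [MOD m]) := by
  have aux : ∀ a b : ℕ, b ≤ a →
      ((b ≡ a [MOD m]) ↔ (l * gs x b ≡ l * gs x a [MOD m])) := by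
    intro a b hba
    obtain ⟨u, rfl⟩ := Nat.exists_eq_add_of_le hba
    have hgs : l * gs x (b + u) = l * gs x b + x ^ b * (l * gs x u) := by
      rw [gs_add]; ring
    have hle : l * gs x b ≤ l * gs x (b + u) := by omega
    rw [Nat.modEq_iff_dvd' (Nat.le_add_right b u), Nat.modEq_iff_dvd' hle]
    have heq : l * gs x (b + u) - l * gs x b = x ^ b * (l * gs x u) := by omega
    rw [heq, Nat.add_sub_cancel_left]
    have hcop' : Nat.Coprime m (x ^ b) := (hcop.symm.pow_right b)
    rw [Nat.Coprime.dvd_mul_left hcop', CONG u]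
  intro a b
  rcases Nat.le_total b a with h | h
  · constructor
    · intro hh; exact ((aux a b h).mp hh.symm).symm
    · intro hh; exact ((aux a b h).mpr hh.symm).symm
  · exact aux b a h

lemma gs_period (x j M u : ℕ) (h : M ∣ j * gs x u) :
    ∀ i w, j * gs x (i + u * w) ≡ j * gs x i [MOD M] := by
  intro i w
  induction w with
  | zero => simpa using Nat.ModEq.refl (j * gs x i)
  | succ w ih =>
      have h1 : i + u * (w + 1) = (i + u * w) + u := by ring
      have h2 : j * gs x ((i + u * w) + u)
          = j * gs x (i + u * w) + x ^ (i + u * w) * (j * gs x u) := by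
        rw [gs_add]; ring
      have h3 : M ∣ x ^ (i + u * w) * (j * gs x u) := Dvd.dvd.mul_left h _
      have h4 : j * gs x ((i + u * w) + u) ≡ j * gs x (i + u * w) [MOD M] := by
        have hle : j * gs x (i + u * w) ≤ j * gs x ((i + u * w) + u) := by omega
        have hsub : j * gs x ((i + u * w) + u) - j * gs x (i + u * w)
            = x ^ (i + u * w) * (j * gs x u) := by omega
        exact ((Nat.modEq_iff_dvd' hle).mpr (hsub ▸ h3)).symm
      rw [h1]
      exact h4.trans ih

lemma gs_mod_reduce (x j M u : ℕ) (hu : 0 < u) (h : M ∣ j * gs x u) (i : ℕ) :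
    j * gs x i ≡ j * gs x (i % u) [MOD M] := by
  have : i % u + u * (i / u) = i := Nat.mod_add_div i u
  have h2 := gs_period x j M u h (i % u) (i / u)
  rw [this] at h2
  exact h2

lemma exists_preimage (Q : ℕ) (hQ : 0 < Q) (A : Set ℕ) (per : ∀ n, n + Q ∈ A ↔ n ∈ A)
    (c w : ℕ) (hw : Nat.Coprime w Q) (hmaps : ∀ n ∈ A, c + w * n ∈ A) :
    ∀ n ∈ A, ∃ n' ∈ A, c + w * n' ≡ n [MOD Q] := by
  classical
  have Amod : ∀ {a b : ℕ}, a ≡ b [MOD Q] → a ∈ A → b ∈ A :=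
    fun h ha => mem_of_modEq hQ per h ha
  set A₀ : Finset ℕ := (Finset.range Q).filter (· ∈ A) with hA₀def
  set f : ℕ → ℕ := fun z => (c + w * z) % Q with hfdef
  have hfmem : ∀ z ∈ A₀, f z ∈ A₀ := by
    intro z hz
    rw [hA₀def, Finset.mem_filter, Finset.mem_range] at hz ⊢
    refine ⟨Nat.mod_lt _ hQ, ?_⟩
    exact Amod (Nat.mod_modEq _ _).symm (hmaps z hz.2)
  have hinj : Set.InjOn f ↑A₀ := by
    intro a ha b hb hfab
    rw [hA₀def, Finset.coe_filter] at ha hb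
    simp only [Set.mem_setOf_eq, Finset.mem_range] at ha hb
    simp only [hfdef] at hfab
    have h1 : c + w * a ≡ c + w * b [MOD Q] := by
      calc c + w * a ≡ (c + w * a) % Q [MOD Q] := (Nat.mod_modEq _ _).symm
        _ = (c + w * b) % Q := hfab
        _ ≡ c + w * b [MOD Q] := Nat.mod_modEq _ _
    have h2 : w * a ≡ w * b [MOD Q] := Nat.ModEq.add_left_cancel' c h1
    have h3 : a ≡ b [MOD Q] := Nat.ModEq.cancel_left_of_coprime hw.symm h2
    have := h3
    unfold Nat.ModEq at this
    rw [Nat.mod_eq_of_lt ha.1, Nat.mod_eq_of_lt hb.1] at this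
    exact this
  have himg : Finset.image f A₀ = A₀ := by
    apply Finset.eq_of_subset_of_card_le
    · intro z hz
      obtain ⟨a, ha, rfl⟩ := Finset.mem_image.mp hz
      exact hfmem a ha
    · rw [Finset.card_image_of_injOn hinj]
  intro n hn
  have hnQ : n % Q ∈ A₀ := by
    rw [hA₀def, Finset.mem_filter, Finset.mem_range]
    exact ⟨Nat.mod_lt _ hQ, Amod (Nat.mod_modEq _ _).symm hn⟩
  rw [← himg] at hnQ
  obtain ⟨a, ha, hfa⟩ := Finset.mem_image.mp hnQ
  rw [hA₀def, Finset.mem_filter] at ha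
  refine ⟨a, ha.2, ?_⟩
  calc c + w * a ≡ (c + w * a) % Q [MOD Q] := (Nat.mod_modEq _ _).symm
    _ = n % Q := hfa
    _ ≡ n [MOD Q] := Nat.mod_modEq _ _

theorem core (x Q m l D : ℕ) (hx : 2 ≤ x) (hQ : 0 < Q) (hmpos : 0 < m)
    (hmQ : m ∣ Q) (hDpos : 0 < D) (hmD : m ∣ D)
    (hxD : x ^ D ≡ 1 [MOD Q])
    (CONG : ∀ k, m ∣ l * gs x k ↔ m ∣ k)
    (A : Set ℕ) (hA0 : 0 ∈ A) (per : ∀ n, n + Q ∈ A ↔ n ∈ A)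
    (TRANS : ∀ n, ∃ k c, c ≡ l * gs x k [MOD m] ∧ c ≡ n [MOD Q]) :
    (∀ k c, c ≡ l * gs x k [MOD m] →
        ((∀ n ∈ A, c + x ^ k * n ∈ A) ∨ (∀ n ∈ A, c + x ^ k * n ∉ A))) ↔
      (∃ e, 0 < e ∧ e ∣ m ∧ ∃ r, 0 < r ∧ m * r ∣ Q ∧ ∃ j n₀,
        j = n₀ * m + l * gs x e ∧ r ∣ j * gs (x ^ e) (m / e) / m ∧
        ∀ n, (n ∈ A ↔ ∃ i < m / e, n ≡ j * gs (x ^ e) i [MOD m * r])) := by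
  have Amod : ∀ {a b : ℕ}, a ≡ b [MOD Q] → a ∈ A → b ∈ A :=
    fun h ha => mem_of_modEq hQ per h ha
  have COPQ : Nat.Coprime x Q := coprime_of_pow_modEq_one x D Q hDpos hxD
  have COPm : Nat.Coprime x m := Nat.Coprime.coprime_dvd_right hmQ COPQ
  have CONG' := cong_iff x m l COPm CONG
  have hxone : ∀ w : ℕ, D ∣ w → x ^ w ≡ 1 [MOD Q] := by
    intro w hw
    obtain ⟨t, rfl⟩ := hw
    calc x ^ (D * t) = (x ^ D) ^ t := by rw [pow_mul]
      _ ≡ 1 ^ t [MOD Q] := Nat.ModEq.pow t hxD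
      _ = 1 := one_pow t
  constructor
  · -- forward: blocks have the canonical form
    intro L
    set SC : ℕ → Set ℕ :=
      fun k => {c | c ≡ l * gs x k [MOD m] ∧ ∀ n ∈ A, c + x ^ k * n ∈ A} with hSCdef
    have hSC0 : 0 ∈ SC 0 := by
      constructor
      · simp [gs_zero, Nat.ModEq.refl]
      · intro n hn; simpa using hn
    have hSCm : 0 ∈ SC m := by
      have hcong : (0:ℕ) ≡ l * gs x m [MOD m] :=
        (Nat.modEq_zero_iff_dvd.mpr ((CONG m).mpr dvd_rfl)).symm
      refine ⟨hcong, ?_⟩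
      rcases L m 0 hcong with h | h
      · exact h
      · exact absurd (by simpa using hA0) (h 0 hA0)
    have hcomp : ∀ {k c k' c'}, c ∈ SC k → c' ∈ SC k' → c + x ^ k * c' ∈ SC (k + k') := by
      intro k c k' c' hc hc'
      constructor
      · have hgs : l * gs x (k + k') = l * gs x k + x ^ k * (l * gs x k') := by
          rw [gs_add]; ring
        rw [hgs]
        exact Nat.ModEq.add hc.1 (Nat.ModEq.mul_left _ hc'.1)
      · intro n hn
        have h1 : c' + x ^ k' * n ∈ A := hc'.2 n hn
        have h2 := hc.2 _ h1
        have heq : c + x ^ k * (c' + x ^ k' * n)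
            = (c + x ^ k * c') + x ^ (k + k') * n := by rw [pow_add]; ring
        rwa [heq] at h2
    have hQper : ∀ k c, c + Q ∈ SC k ↔ c ∈ SC k := by
      intro k c
      obtain ⟨w, hw⟩ := hmQ
      have hcong : (c + Q) ≡ c [MOD m] := by
        rw [hw]
        simpa [Nat.ModEq] using Nat.add_mul_mod_self_left c m w
      constructor
      · intro hc
        refine ⟨hcong.symm.trans hc.1, fun n hn => ?_⟩
        have := hc.2 n hn
        have heq : c + Q + x ^ k * n = (c + x ^ k * n) + Q := by ring
        rw [heq] at this
        exact (per _).mp this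
      · intro hc
        refine ⟨hcong.trans hc.1, fun n hn => ?_⟩
        have := hc.2 n hn
        have heq : c + Q + x ^ k * n = (c + x ^ k * n) + Q := by ring
        rw [heq]
        exact (per _).mpr this
    have hSCQmod : ∀ {k c c'}, c ∈ SC k → c ≡ c' [MOD Q] → c' ∈ SC k := by
      intro k c c' hc h
      exact mem_of_modEq (T := SC k) hQ (fun n => hQper k n) h hc
    have hDper : ∀ k c, c ∈ SC (k + D) ↔ c ∈ SC k := by
      intro k c
      have hcong : l * gs x (k + D) ≡ l * gs x k [MOD m] :=
        (CONG' (k + D) k).mp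
          ((Nat.modEq_iff_dvd' (Nat.le_add_right k D)).mpr (by simpa using hmD)).symm
      have hpow : ∀ n : ℕ, x ^ (k + D) * n ≡ x ^ k * n [MOD Q] := by
        intro n
        calc x ^ (k + D) * n = x ^ k * n * x ^ D := by rw [pow_add]; ring
          _ ≡ x ^ k * n * 1 [MOD Q] := Nat.ModEq.mul_left _ hxD
          _ = x ^ k * n := by ring
      constructor
      · intro hc
        refine ⟨hc.1.trans hcong, fun n hn => ?_⟩
        exact Amod (Nat.ModEq.add_left c (hpow n)) (hc.2 n hn)
      · intro hc
        refine ⟨hc.1.trans hcong.symm, fun n hn => ?_⟩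
        exact Amod (Nat.ModEq.add_left c (hpow n)).symm (hc.2 n hn)
    have hDperMul : ∀ w k c, c ∈ SC (k + D * w) ↔ c ∈ SC k := by
      intro w
      induction w with
      | zero => simp
      | succ w ih =>
          intro k c
          have : k + D * (w + 1) = (k + D * w) + D := by ring
          rw [this, hDper, ih]
    have hinv : ∀ k c, c ∈ SC k →
        ∃ k' β, D ∣ k + k' ∧ Q ∣ β + c ∧ x ^ k' * β ∈ SC k' := by
      intro k c hc
      set k' := D - k % D with hk'def
      have hkk' : D ∣ k + k' := by
        have h1 : k % D < D := Nat.mod_lt _ hDpos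
        have h2 := Nat.div_add_mod k D
        refine ⟨k / D + 1, ?_⟩
        have h3 : D * (k / D + 1) = D * (k / D) + D := by ring
        omega
      set β := Q * (c + 1) - c with hβdef
      have hβ : Q ∣ β + c := by
        have h1 : c + 1 ≤ Q * (c + 1) := Nat.le_mul_of_pos_left _ hQ
        exact ⟨c + 1, by omega⟩
      refine ⟨k', β, hkk', hβ, ?_, ?_⟩
      · -- congruence part
        have h1 : x ^ k' * β + x ^ k' * c ≡ 0 [MOD m] := by
          have : x ^ k' * β + x ^ k' * c = x ^ k' * (β + c) := by ring
          rw [this, Nat.modEq_zero_iff_dvd]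
          exact Dvd.dvd.mul_left (hmQ.trans hβ) _
        have h2 : l * gs x k' + x ^ k' * c ≡ 0 [MOD m] := by
          have hc1 := hc.1
          have : l * gs x k' + x ^ k' * c ≡ l * gs x k' + x ^ k' * (l * gs x k) [MOD m] :=
            Nat.ModEq.add_left _ (Nat.ModEq.mul_left _ hc1)
          refine this.trans ?_
          have heq : l * gs x k' + x ^ k' * (l * gs x k) = l * gs x (k' + k) := by
            rw [gs_add]; ring
          rw [heq, Nat.modEq_zero_iff_dvd]
          refine (CONG _).mpr (dvd_trans hmD ?_)
          rwa [Nat.add_comm k' k]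
        have h3 : x ^ k' * β + x ^ k' * c ≡ l * gs x k' + x ^ k' * c [MOD m] :=
          h1.trans h2.symm
        exact Nat.ModEq.add_right_cancel' _ h3
      · -- mapsTo part
        intro n hn
        obtain ⟨n', hn', hcong⟩ :=
          exists_preimage Q hQ A per c (x ^ k) (COPQ.pow_left k) hc.2 n hn
        have hxkk' : x ^ (k + k') ≡ 1 [MOD Q] := hxone _ hkk'
        have key : x ^ k' * β + x ^ k' * n ≡ n' [MOD Q] := by
          calc x ^ k' * β + x ^ k' * n
              ≡ x ^ k' * β + x ^ k' * (c + x ^ k * n') [MOD Q] :=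
                Nat.ModEq.add_left _ (Nat.ModEq.mul_left _ hcong.symm)
            _ = x ^ k' * (β + c) + x ^ (k + k') * n' := by rw [pow_add]; ring
            _ ≡ x ^ k' * 0 + 1 * n' [MOD Q] := by
                refine Nat.ModEq.add ?_ (Nat.ModEq.mul_right _ hxkk')
                refine Nat.ModEq.mul_left _ ?_
                exact Nat.modEq_zero_iff_dvd.mpr hβ
            _ = n' := by ring
        exact Amod key.symm hn'
    -- the exponent set
    obtain ⟨e, hepos, heD, hSE⟩ :
        ∃ e, 0 < e ∧ e ∣ D ∧ ∀ k, k ∈ {k | ∃ c, c ∈ SC k} ↔ e ∣ k := by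
      apply exists_divisor hDpos
      · intro k
        constructor
        · rintro ⟨c, hc⟩; exact ⟨c, (hDper k c).mp hc⟩
        · rintro ⟨c, hc⟩; exact ⟨c, (hDper k c).mpr hc⟩
      · exact ⟨0, hSC0⟩
      · rintro a ⟨c, hc⟩ b ⟨c', hc'⟩
        exact ⟨c + x ^ a * c', hcomp hc hc'⟩
      · rintro a ⟨c, hc⟩
        obtain ⟨k', β, h1, h2, h3⟩ := hinv a c hc
        exact ⟨k', ⟨_, h3⟩, h1⟩
    have hem : e ∣ m := (hSE m).mp ⟨0, hSCm⟩
    -- the subgroup C0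
    obtain ⟨c₀, hc₀pos, hc₀Q, hC0⟩ :
        ∃ c₀, 0 < c₀ ∧ c₀ ∣ Q ∧ ∀ n, n ∈ SC 0 ↔ c₀ ∣ n := by
      apply exists_divisor hQ
      · intro n; exact hQper 0 n
      · exact hSC0
      · intro a ha b hb
        have := hcomp ha hb
        simpa using this
      · intro a ha
        obtain ⟨k', β, h1, h2, h3⟩ := hinv 0 a ha
        simp only [Nat.zero_add] at h1
        obtain ⟨w, rfl⟩ := h1
        have hβ0 : x ^ (D * w) * β ∈ SC 0 := by
          have := (hDperMul w 0 (x ^ (D * w) * β)).mp (by simpa using h3)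
          exact this
        refine ⟨x ^ (D * w) * β, hβ0, ?_⟩
        have : x ^ (D * w) * β ≡ 1 * β [MOD Q] := Nat.ModEq.mul_right _ (hxone _ ⟨w, rfl⟩)
        have h4 : x ^ (D * w) * β + a ≡ β + a [MOD Q] := by
          simpa using Nat.ModEq.add_right a this
        have h5 : Q ∣ x ^ (D * w) * β + a :=
          Nat.modEq_zero_iff_dvd.mp (h4.trans (Nat.modEq_zero_iff_dvd.mpr h2))
        rwa [Nat.add_comm] at h5
    have hmc₀ : m ∣ c₀ := by
      have h1 : c₀ ∈ SC 0 := (hC0 c₀).mpr dvd_rfl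
      have := h1.1
      rw [gs_zero, Nat.mul_zero] at this
      exact Nat.modEq_zero_iff_dvd.mp this
    obtain ⟨r, hr⟩ := hmc₀
    have hrpos : 0 < r := by
      rcases Nat.eq_zero_or_pos r with rfl | h
      · omega
      · exact h
    -- A is the orbit of 0
    have AC : ∀ n, n ∈ A ↔ ∃ k c, c ∈ SC k ∧ c ≡ n [MOD Q] := by
      intro n
      constructor
      · intro hn
        obtain ⟨k, c, hcong, hcQ⟩ := TRANS n
        have hcA : c ∈ A := Amod hcQ.symm hn
        rcases L k c hcong with h | h
        · exact ⟨k, c, ⟨hcong, h⟩, hcQ⟩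
        · exact absurd (by simpa using hcA) (h 0 hA0)
      · rintro ⟨k, c, hc, hcQ⟩
        have : c + x ^ k * 0 ∈ A := hc.2 0 hA0
        simp only [Nat.mul_zero, Nat.add_zero] at this
        exact Amod hcQ this
    -- cosets
    have CSTd : ∀ k c c', c ∈ SC k → c' ∈ SC k → ∃ t, c' ≡ c + c₀ * t [MOD Q] := by
      intro k c c' hc hc'
      obtain ⟨k', β, h1, h2, h3⟩ := hinv k c hc
      have hγ : c' + x ^ k * (x ^ k' * β) ∈ SC (k + k') := hcomp hc' h3
      obtain ⟨w, hw⟩ := h1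
      have hγ0 : c' + x ^ k * (x ^ k' * β) ∈ SC 0 := by
        have := hγ
        rw [hw] at this
        exact (hDperMul w 0 _).mp (by simpa using this)
      obtain ⟨t, ht⟩ := (hC0 _).mp hγ0
      refine ⟨t, ?_⟩
      have key : c + (c' + x ^ k * (x ^ k' * β)) ≡ c' [MOD Q] := by
        calc c + (c' + x ^ k * (x ^ k' * β))
            = c' + (x ^ (k + k') * β + c) := by rw [pow_add]; ring
          _ ≡ c' + (1 * β + c) [MOD Q] := by
              exact Nat.ModEq.add_left _ (Nat.ModEq.add_right _
                (Nat.ModEq.mul_right _ (hxone _ ⟨w, hw⟩)))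
          _ = c' + (β + c) := by ring
          _ ≡ c' + 0 [MOD Q] := Nat.ModEq.add_left _ (Nat.modEq_zero_iff_dvd.mpr h2)
          _ = c' := by ring
      rw [← ht]
      exact key.symm
    -- choose j
    obtain ⟨c1, hc1⟩ : ∃ c, c ∈ SC e := (hSE e).mpr dvd_rfl
    set j := c1 + Q * (l * gs x e + 1) with hjdef
    have hjSC : j ∈ SC e := by
      apply hSCQmod hc1
      simpa [Nat.ModEq, hjdef] using (Nat.add_mul_mod_self_left c1 Q (l * gs x e + 1)).symm
    have hjge : l * gs x e ≤ j := by
      have : l * gs x e + 1 ≤ Q * (l * gs x e + 1) := Nat.le_mul_of_pos_left _ hQ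
      omega
    obtain ⟨n₀, hn₀⟩ : ∃ n₀, j = n₀ * m + l * gs x e := by
      have h1 : l * gs x e ≡ j [MOD m] := hjSC.1.symm
      obtain ⟨n₀, hn₀⟩ := (Nat.modEq_iff_dvd' hjge).mp h1
      have hcomm : m * n₀ = n₀ * m := Nat.mul_comm _ _
      exact ⟨n₀, by omega⟩
    set u := m / e with hudef
    have hupos : 0 < u := Nat.div_pos (Nat.le_of_dvd hmpos hem) hepos
    have heu : e * u = m := Nat.mul_div_cancel' hem
    -- powers of j
    have JJ : ∀ i, j * gs (x ^ e) i ∈ SC (e * i) := by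
      intro i
      induction i with
      | zero => simpa [gs_zero] using hSC0
      | succ i ih =>
          have h1 := hcomp hjSC ih
          have heq : j + x ^ e * (j * gs (x ^ e) i) = j * gs (x ^ e) (i + 1) := by
            rw [gs_succ']; ring
          have heq2 : e + e * i = e * (i + 1) := by ring
          rw [heq, heq2] at h1
          exact h1
    -- divisibility
    have hdvdu : c₀ ∣ j * gs (x ^ e) u := by
      have h1 : j * gs (x ^ e) u ∈ SC m := by
        have := JJ u
        rwa [heu] at this
      obtain ⟨t, ht⟩ := CSTd m 0 _ hSCm h1
      simp only [Nat.zero_add] at ht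
      have h2 : j * gs (x ^ e) u ≡ c₀ * t [MOD c₀] := Nat.ModEq.of_dvd hc₀Q ht
      have h3 : j * gs (x ^ e) u ≡ 0 [MOD c₀] :=
        h2.trans (Nat.modEq_zero_iff_dvd.mpr (Dvd.intro t rfl))
      exact Nat.modEq_zero_iff_dvd.mp h3
    refine ⟨e, hepos, hem, r, hrpos, hr ▸ hc₀Q, j, n₀, hn₀, ?_, ?_⟩
    · -- r ∣ j * gs (x^e) u / m
      obtain ⟨w, hw⟩ := hdvdu
      refine ⟨w, ?_⟩
      rw [hw, hr, Nat.mul_assoc, Nat.mul_div_cancel_left _ hmpos]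
    · -- characterization of A
      intro n
      rw [AC n]
      constructor
      · rintro ⟨k, c, hc, hcQ⟩
        obtain ⟨i', hi'⟩ := (hSE k).mp ⟨c, hc⟩
        have hji' : j * gs (x ^ e) i' ∈ SC k := by rw [hi']; exact JJ i'
        obtain ⟨t, ht⟩ := CSTd k _ c hji' hc
        have h1 : n ≡ j * gs (x ^ e) i' + c₀ * t [MOD c₀] :=
          Nat.ModEq.of_dvd hc₀Q (hcQ.symm.trans ht)
        have h2 : n ≡ j * gs (x ^ e) i' [MOD c₀] := by
          have : j * gs (x ^ e) i' + c₀ * t ≡ j * gs (x ^ e) i' + 0 [MOD c₀] :=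
            Nat.ModEq.add_left _ (Nat.modEq_zero_iff_dvd.mpr (Dvd.intro t rfl))
          simpa using h1.trans this
        refine ⟨i' % u, Nat.mod_lt _ hupos, ?_⟩
        rw [← hr]
        exact h2.trans (gs_mod_reduce (x ^ e) j c₀ u hupos hdvdu i')
      · rintro ⟨i, hi, hmod⟩
        have h1 : j * gs (x ^ e) i ∈ A := by
          rw [AC]
          exact ⟨e * i, _, JJ i, Nat.ModEq.refl _⟩
        -- A is closed under congruence mod c₀
        rw [← hr] at hmod
        set b := n + Q * (j * gs (x ^ e) i + 1) with hbdef
        have hbn : b ≡ n [MOD Q] := by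
          simpa [Nat.ModEq, hbdef] using Nat.add_mul_mod_self_left n Q _
        have hge : j * gs (x ^ e) i ≤ b := by
          have : j * gs (x ^ e) i + 1 ≤ Q * (j * gs (x ^ e) i + 1) :=
            Nat.le_mul_of_pos_left _ hQ
          omega
        have hbc : b ≡ j * gs (x ^ e) i [MOD c₀] :=
          (Nat.ModEq.of_dvd hc₀Q hbn).trans hmod
        obtain ⟨γ, hγ⟩ := (Nat.modEq_iff_dvd' hge).mp hbc.symm
        have hγ0 : c₀ * γ ∈ SC 0 := (hC0 _).mpr (Dvd.intro γ rfl)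
        have : c₀ * γ + x ^ 0 * (j * gs (x ^ e) i) ∈ A := hγ0.2 _ h1
        have hb : b ∈ A := by
          have heq : c₀ * γ + x ^ 0 * (j * gs (x ^ e) i) = b := by
            simp only [pow_zero, one_mul]; omega
          rwa [heq] at this
        exact (AC n).mp (Amod hbn hb)
  · -- backward: the canonical form is a block
    rintro ⟨e, hepos, hem, r, hrpos, hmrQ, j, n₀, hj, hrdvd, hA⟩ k c hc
    set u := m / e with hudef
    have hupos : 0 < u := Nat.div_pos (Nat.le_of_dvd hmpos hem) hepos
    have heu : e * u = m := Nat.mul_div_cancel' hem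
    set X := j * gs (x ^ e) u with hXdef
    have hXeq : X = m * (n₀ * gs (x ^ e) u) + l * gs x m := by
      rw [hXdef, hj, Nat.add_mul, ← heu, gs_mul]; ring
    have hmX : m ∣ X := by
      rw [hXeq]
      exact Nat.dvd_add (Dvd.intro _ rfl) (heu ▸ ((CONG m).mpr dvd_rfl))
    have hmrX : m * r ∣ X := by
      obtain ⟨v, hv⟩ := hmX
      have : X / m = v := by rw [hv, Nat.mul_div_cancel_left _ hmpos]
      rw [this] at hrdvd
      obtain ⟨w, hw⟩ := hrdvd
      exact ⟨w, by rw [hv, hw]; ring⟩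
    have F4 : ∀ a b, a ≡ b [MOD m] → j * x ^ a ≡ j * x ^ b [MOD m * r] := by
      have hjm : m * r ∣ j * (x ^ m - 1) := by
        have h1 : j * (x ^ m - 1) = X * (x ^ e - 1) := by
          have h2 : (x ^ e - 1) * gs (x ^ e) u = (x ^ e) ^ u - 1 :=
            pred_mul_gs (x ^ e) u (Nat.one_le_pow _ _ (by omega))
          have h3 : (x ^ e) ^ u = x ^ m := by rw [← pow_mul, heu]
          calc j * (x ^ m - 1) = j * ((x ^ e - 1) * gs (x ^ e) u) := by rw [h2, h3]
            _ = X * (x ^ e - 1) := by rw [hXdef]; ring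
        rw [h1]
        exact Dvd.dvd.mul_right hmrX _
      have aux : ∀ a b, b ≤ a → a ≡ b [MOD m] → j * x ^ a ≡ j * x ^ b [MOD m * r] := by
        intro a b hba hab
        obtain ⟨t, ht⟩ := (Nat.modEq_iff_dvd' hba).mp hab.symm
        have ha : a = b + m * t := by omega
        have h1 : m * r ∣ j * (x ^ (m * t) - 1) := by
          refine hjm.trans ?_
          refine Nat.mul_dvd_mul_left j ?_
          have := sub_one_dvd_pow_sub_one (x ^ m) t
          rwa [← pow_mul] at this
        have h2 : j * x ^ b ≤ j * x ^ a := by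
          apply Nat.mul_le_mul_left
          exact Nat.pow_le_pow_right (by omega) (by omega)
        refine ((Nat.modEq_iff_dvd' h2).mpr ?_).symm
        have heq : j * x ^ a - j * x ^ b = (j * (x ^ (m * t) - 1)) * x ^ b := by
          have h3 : x ^ a = x ^ b * x ^ (m * t) := by rw [ha, pow_add]
          have h4 : 1 ≤ x ^ (m * t) := Nat.one_le_pow _ _ (by omega)
          have h5 : j * (x ^ (m * t) - 1) = j * x ^ (m * t) - j := by
            rw [Nat.mul_sub, Nat.mul_one]
          rw [h5, h3]
          have h6 : j ≤ j * x ^ (m * t) := Nat.le_mul_of_pos_right _ (by omega)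
          calc j * (x ^ b * x ^ (m * t)) - j * x ^ b
              = (j * x ^ (m * t)) * x ^ b - j * x ^ b := by ring_nf
            _ = (j * x ^ (m * t) - j) * x ^ b := by rw [Nat.sub_mul]
        rw [heq]
        exact Dvd.dvd.mul_right h1 _
      intro a b hab
      rcases Nat.le_total b a with h | h
      · exact aux a b h hab
      · exact (aux b a h hab.symm).symm
    have hper : ∀ i w, j * gs (x ^ e) (i + u * w) ≡ j * gs (x ^ e) i [MOD m * r] :=
      gs_period (x ^ e) j (m * r) u hmrX
    have hredi : ∀ i, j * gs (x ^ e) i ≡ j * gs (x ^ e) (i % u) [MOD m * r] :=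
      gs_mod_reduce (x ^ e) j (m * r) u hupos hmrX
    have hmodm : ∀ i, j * gs (x ^ e) i ≡ l * gs x (e * i) [MOD m] := by
      intro i
      have heq : j * gs (x ^ e) i = m * (n₀ * gs (x ^ e) i) + l * gs x (e * i) := by
        rw [hj, Nat.add_mul, gs_mul]; ring
      rw [heq]
      simpa [Nat.ModEq] using Nat.mul_add_mod m _ _
    by_cases hbr : ∃ n₂ ∈ A, c + x ^ k * n₂ ∈ A
    · left
      obtain ⟨n₂, hn₂A, hn₂img⟩ := hbr
      obtain ⟨i₀, hi₀u, h0⟩ := (hA n₂).mp hn₂A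
      obtain ⟨i₁, hi₁u, h1⟩ := (hA _).mp hn₂img
      -- derive the index congruence mod m
      have hkey : k + e * i₀ ≡ e * i₁ [MOD m] := by
        have ha : c + x ^ k * (j * gs (x ^ e) i₀) ≡ j * gs (x ^ e) i₁ [MOD m * r] := by
          refine Nat.ModEq.trans ?_ h1
          exact Nat.ModEq.add_left _ (Nat.ModEq.mul_left _ h0.symm)
        have hb : c + x ^ k * (j * gs (x ^ e) i₀) ≡ j * gs (x ^ e) i₁ [MOD m] :=
          Nat.ModEq.of_dvd (Dvd.intro r rfl) ha
        have hcng : l * gs x (k + e * i₀) ≡ l * gs x (e * i₁) [MOD m] := by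
          have hgs : l * gs x (k + e * i₀) = l * gs x k + x ^ k * (l * gs x (e * i₀)) := by
            rw [gs_add]; ring
          calc l * gs x (k + e * i₀)
              = l * gs x k + x ^ k * (l * gs x (e * i₀)) := hgs
            _ ≡ c + x ^ k * (j * gs (x ^ e) i₀) [MOD m] :=
                Nat.ModEq.add hc.symm (Nat.ModEq.mul_left _ (hmodm i₀).symm)
            _ ≡ j * gs (x ^ e) i₁ [MOD m] := hb
            _ ≡ l * gs x (e * i₁) [MOD m] := hmodm i₁
        exact (CONG' _ _).mpr hcng
      have CLAIM : ∀ t, c + x ^ k * (j * gs (x ^ e) (i₀ + t))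
          ≡ j * gs (x ^ e) (i₁ + t) [MOD m * r] := by
        intro t
        induction t with
        | zero =>
            simpa using (Nat.ModEq.add_left c (Nat.ModEq.mul_left (x ^ k) h0.symm)).trans h1
        | succ t ih =>
            have hL : c + x ^ k * (j * gs (x ^ e) (i₀ + (t+1)))
                = (c + x ^ k * (j * gs (x ^ e) (i₀ + t))) + j * x ^ (k + e * (i₀ + t)) := by
              have : i₀ + (t + 1) = (i₀ + t) + 1 := by ring
              rw [this, gs_succ, ← pow_mul, pow_add]
              ring
            have hR : j * gs (x ^ e) (i₁ + (t+1))
                = j * gs (x ^ e) (i₁ + t) + j * x ^ (e * (i₁ + t)) := by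
              have : i₁ + (t + 1) = (i₁ + t) + 1 := by ring
              rw [this, gs_succ, ← pow_mul]
              ring
            rw [hL, hR]
            refine Nat.ModEq.add ih (F4 _ _ ?_)
            have : k + e * (i₀ + t) = (k + e * i₀) + e * t := by ring
            rw [this]
            have h2 : e * (i₁ + t) = e * i₁ + e * t := by ring
            rw [h2]
            exact Nat.ModEq.add_right _ hkey
      intro n hn
      obtain ⟨i₂, hi₂u, h2⟩ := (hA n).mp hn
      set t := i₂ + u * (i₀ + 1) - i₀ with htdef
      have hi₀t : i₀ + t = i₂ + u * (i₀ + 1) := by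
        have : i₀ + 1 ≤ u * (i₀ + 1) := Nat.le_mul_of_pos_left _ hupos
        omega
      rw [hA]
      refine ⟨(i₁ + t) % u, Nat.mod_lt _ hupos, ?_⟩
      calc c + x ^ k * n
          ≡ c + x ^ k * (j * gs (x ^ e) i₂) [MOD m * r] :=
            Nat.ModEq.add_left _ (Nat.ModEq.mul_left _ h2)
        _ ≡ c + x ^ k * (j * gs (x ^ e) (i₀ + t)) [MOD m * r] := by
            rw [hi₀t]
            exact Nat.ModEq.add_left _ (Nat.ModEq.mul_left _ (hper i₂ (i₀ + 1)).symm)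
        _ ≡ j * gs (x ^ e) (i₁ + t) [MOD m * r] := CLAIM t
        _ ≡ j * gs (x ^ e) ((i₁ + t) % u) [MOD m * r] := hredi _
    · right
      intro n hn hmem
      exact hbr ⟨n, hn, hmem⟩

section FieldPart

variable {F : Type*} [Field F] [Fintype F]

lemma xi_order (ξ : F) (hξ0 : ξ ≠ 0) (hξgen : ∀ z : F, z ≠ 0 → ∃ k : ℕ, ξ ^ k = z) :
    orderOf ξ = Fintype.card F - 1 := by
  classical
  set u : Fˣ := Units.mk0 ξ hξ0 with hu
  have hval : (u : F) = ξ := rfl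
  have hcov : ∀ v : Fˣ, v ∈ Subgroup.zpowers u := by
    intro v
    obtain ⟨k, hk⟩ := hξgen v.val (Units.ne_zero v)
    refine ⟨(k : ℤ), ?_⟩
    have : (u ^ k : Fˣ) = v := by
      ext
      simpa [hval] using hk
    simpa [zpow_natCast] using this
  have h1 : orderOf u = Fintype.card Fˣ := by
    simpa [Nat.card_eq_fintype_card] using orderOf_eq_card_of_forall_mem_zpowers hcov
  have h2 : orderOf (u : F) = orderOf u := orderOf_units
  rw [hval] at h2
  rw [h2, h1, Fintype.card_units]

lemma xi_pow_iff (ξ : F) (hξ0 : ξ ≠ 0) (hξgen : ∀ z : F, z ≠ 0 → ∃ k : ℕ, ξ ^ k = z)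
    (a b : ℕ) : ξ ^ a = ξ ^ b ↔ a ≡ b [MOD Fintype.card F - 1] := by
  set u : Fˣ := Units.mk0 ξ hξ0 with hu
  have hval : (u : F) = ξ := rfl
  have hord : orderOf u = Fintype.card F - 1 := by
    have h2 : orderOf (u : F) = orderOf u := orderOf_units
    rw [hval] at h2
    rw [← h2]
    exact xi_order ξ hξ0 hξgen
  have hiff : (ξ ^ a = ξ ^ b) ↔ (u ^ a = u ^ b) := by
    constructor
    · intro h; ext; simpa [hval] using h
    · intro h
      have := congrArg (Units.val (α := F)) h
      simpa [hval] using this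
  rw [hiff, pow_eq_pow_iff_modEq, hord]

lemma ncard_pows (ξ : F) (hξ0 : ξ ≠ 0) (hξgen : ∀ z : F, z ≠ 0 → ∃ k : ℕ, ξ ^ k = z)
    (c : ℕ) (hcpos : 0 < c) (hc : c ∣ Fintype.card F - 1) :
    Set.ncard {a : F | ∃ t, a = ξ ^ (c * t)} = (Fintype.card F - 1) / c := by
  classical
  set Q := Fintype.card F - 1 with hQdef
  have hQpos : 0 < Q := by
    have := Fintype.one_lt_card (α := F)
    omega
  have hQc : c * (Q / c) = Q := Nat.mul_div_cancel' hc
  have hQcpos : 0 < Q / c := Nat.div_pos (Nat.le_of_dvd hQpos hc) hcpos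
  have hiff := xi_pow_iff ξ hξ0 hξgen
  have himg : {a : F | ∃ t, a = ξ ^ (c * t)} = (fun t : ℕ => ξ ^ (c * t)) '' Set.Iio (Q / c) := by
    ext a
    constructor
    · rintro ⟨t, rfl⟩
      refine ⟨t % (Q / c), Nat.mod_lt _ hQcpos, ?_⟩
      have hmod : c * (t % (Q / c)) ≡ c * t [MOD Q] := by
        have h1 : t % (Q / c) ≡ t [MOD Q / c] := Nat.mod_modEq t (Q / c)
        have h2 : c * (t % (Q / c)) ≡ c * t [MOD c * (Q / c)] := h1.mul_left' (c := c)
        rwa [hQc] at h2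
      exact ((hiff _ _).mpr hmod)
    · rintro ⟨t, _, rfl⟩
      exact ⟨t, rfl⟩
  have hinj : Set.InjOn (fun t : ℕ => ξ ^ (c * t)) (Set.Iio (Q / c)) := by
    intro a ha b hb hab
    simp only [Set.mem_Iio] at ha hb
    have h1 : c * a ≡ c * b [MOD Q] := (hiff _ _).mp hab
    have h2 : c * a < Q := by
      calc c * a < c * (Q / c) := (Nat.mul_lt_mul_left hcpos).mpr ha
        _ = Q := hQc
    have h3 : c * b < Q := by
      calc c * b < c * (Q / c) := (Nat.mul_lt_mul_left hcpos).mpr hb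
        _ = Q := hQc
    have : c * a = c * b := by
      unfold Nat.ModEq at h1
      rwa [Nat.mod_eq_of_lt h2, Nat.mod_eq_of_lt h3] at h1
    exact Nat.eq_of_mul_eq_mul_left hcpos this
  rw [himg, Set.ncard_image_of_injOn hinj]
  rw [← Finset.coe_Iio, Set.ncard_coe_finset, Nat.card_Iio]

end FieldPart

end Stmt13


/-- `scalarFrob G p a k` says that the map t(a,k) : z ↦ a·z^{p^k} belongs to G
(as a permutation of the field; such a map automatically fixes 0). -/
def scalarFrob {F : Type*} [Field F] (G : Subgroup (Equiv.Perm F)) (p : ℕ)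
    (a : F) (k : ℕ) : Prop :=
  ∃ g ∈ G, ∀ z : F, g z = a * z ^ p ^ k

open Stmt13

/-- Lemma 3.10: let G ≤ AΓL(1,q) be 2-transitive on F_q, q = p^d, with s, m as in
Lemma 3.8, H = {a : t(a,0) ∈ G₀} and H₁ = {a : t(a,s) ∈ G₀} = Hξ^ℓ for a generator ξ
of F_q^× and ℓ coprime to m. A subset P of F_q^× containing 1 is an imprimitive block
of G₀ on F_q^× iff either P is a subgroup of F_q^×, or there exist n ≥ 0, e ∣ m and
K ≤ H with |H|/|K| dividing j[ψ,m/e]/m such that P = K ∪ w^{[ψ,1]}K ∪ ⋯ ∪ w^{[ψ,m/e-1]}K,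
where j = nm + ℓ[φ,e], w = ξ^j, φ = ζ^s and ψ = ζ^{es}. -/
theorem stmt_13 {F : Type*} [Field F] [Fintype F] (p d : ℕ) (hp : p.Prime) (hd : 0 < d)
    (hcard : Fintype.card F = p ^ d)
    (G : Subgroup (Equiv.Perm F))
    (hAGL : ∀ g ∈ G, ∃ (a c : F) (k : ℕ), ∀ z : F, g z = a * z ^ p ^ k + c)
    (h2trans : ∀ x y x' y' : F, x ≠ y → x' ≠ y' → ∃ g ∈ G, g x = x' ∧ g y = y')
    (s : ℕ) (hs : IsLeast {k | 0 < k ∧ ∃ a : F, a ≠ 0 ∧ scalarFrob G p a k} s)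
    (m : ℕ) (hm : IsLeast {k | 0 < k ∧ scalarFrob G p 1 (k * s)} m)
    (ξ : F) (hξ0 : ξ ≠ 0) (hξgen : ∀ z : F, z ≠ 0 → ∃ k : ℕ, ξ ^ k = z)
    (l : ℕ) (hl : 0 < l) (hlm : Nat.Coprime l m)
    (hH1 : {a : F | scalarFrob G p a s} =
      (fun h : F => h * ξ ^ l) '' {a : F | scalarFrob G p a 0})
    (P : Set F) (hP0 : ∀ z ∈ P, z ≠ 0) (hP1 : (1 : F) ∈ P) :
    (∀ g ∈ G, g 0 = 0 → (⇑g '' P = P ∨ (⇑g '' P) ∩ P = ∅)) ↔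
      (((∀ x ∈ P, ∀ y ∈ P, x * y ∈ P) ∧ (∀ x ∈ P, x⁻¹ ∈ P)) ∨
        ∃ (n e : ℕ), 0 < e ∧ e ∣ m ∧
          ∃ K : Set F, K ⊆ {a : F | scalarFrob G p a 0} ∧ (1 : F) ∈ K ∧
            (∀ x ∈ K, ∀ y ∈ K, x * y ∈ K) ∧ (∀ x ∈ K, x⁻¹ ∈ K) ∧
            ∃ j : ℕ, j = n * m + l * ((p ^ (s * e) - 1) / (p ^ s - 1)) ∧
              (Set.ncard {a : F | scalarFrob G p a 0} / Set.ncard K ∣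
                j * ((p ^ (e * s * (m / e)) - 1) / (p ^ (e * s) - 1)) / m) ∧
              P = {v : F | ∃ i < m / e, ∃ k ∈ K,
                v = (ξ ^ j) ^ ((p ^ (e * s * i) - 1) / (p ^ (e * s) - 1)) * k}) := by
  classical
  -- ===== Stage 1 : basic numerical setup =====
  have hq2 : 2 ≤ Fintype.card F := Fintype.one_lt_card
  set Q : ℕ := Fintype.card F - 1 with hQdef
  have hQpos : 0 < Q := by omega
  have hp2 : 2 ≤ p := hp.two_le
  have spos : 0 < s := hs.1.1
  have mpos : 0 < m := hm.1.1
  have hxiQ1 : ξ ^ Q = 1 := by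
    have := FiniteField.pow_card_sub_one_eq_one ξ hξ0
    simpa [hQdef] using this
  have hxipow : ∀ a b : ℕ, ξ ^ a = ξ ^ b ↔ a ≡ b [MOD Q] := by
    intro a b
    simpa [hQdef] using xi_pow_iff ξ hξ0 hξgen a b
  have hpowd : ∀ z : F, z ^ p ^ d = z := by
    intro z
    have := FiniteField.pow_card z
    rwa [hcard] at this
  have hpow_shift : ∀ (a : ℕ) (z : F), z ^ p ^ (a + d) = z ^ p ^ a := by
    intro a z
    rw [pow_add, pow_mul]
    exact hpowd _
  have hpow_congr : ∀ {a b : ℕ}, a ≡ b [MOD d] → ∀ z : F, z ^ p ^ a = z ^ p ^ b := by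
    have aux : ∀ (a t : ℕ) (z : F), z ^ p ^ (a + d * t) = z ^ p ^ a := by
      intro a t
      induction t with
      | zero => intro z; simp
      | succ t ih =>
          intro z
          have h1 : a + d * (t + 1) = (a + d * t) + d := by ring
          rw [h1, hpow_shift]
          exact ih z
    intro a b hab z
    rcases Nat.le_total a b with h | h
    · obtain ⟨t, ht⟩ := (Nat.modEq_iff_dvd' h).mp hab
      have : b = a + d * t := by omega
      rw [this, aux]
    · obtain ⟨t, ht⟩ := (Nat.modEq_iff_dvd' h).mp hab.symm
      have : a = b + d * t := by omega
      rw [this, aux]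
  -- ===== Stage 2 : scalarFrob machinery =====
  have SFne : ∀ {a : F} {k : ℕ}, scalarFrob G p a k → a ≠ 0 := by
    rintro a k ⟨g, hg, hgz⟩ rfl
    have hpk : (p:ℕ) ^ k ≠ 0 := (pow_pos (by omega : 0 < p) k).ne'
    have h1 : g 1 = 0 := by simpa using hgz 1
    have h0 : g 0 = 0 := by
      have h2 := hgz 0
      rwa [zero_pow hpk, mul_zero] at h2
    exact one_ne_zero (g.injective (h1.trans h0.symm))
  have SFext : ∀ {a : F} {k k' : ℕ}, (∀ z : F, z ^ p ^ k = z ^ p ^ k') →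
      scalarFrob G p a k → scalarFrob G p a k' := by
    rintro a k k' hzz ⟨g, hg, hgz⟩
    exact ⟨g, hg, fun z => by rw [hgz z, hzz z]⟩
  have SFcongr : ∀ {a : F} {k k' : ℕ}, k ≡ k' [MOD d] →
      scalarFrob G p a k → scalarFrob G p a k' :=
    fun h => SFext (fun z => hpow_congr h z)
  have SFone : scalarFrob G p 1 0 := by
    refine ⟨1, one_mem G, fun z => ?_⟩
    simp
  have SFmul : ∀ {a : F} {k : ℕ} {b : F} {k' : ℕ}, scalarFrob G p a k →
      scalarFrob G p b k' → scalarFrob G p (a * b ^ p ^ k) (k + k') := by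
    rintro a k b k' ⟨g, hg, hgz⟩ ⟨g', hg', hg'z⟩
    refine ⟨g * g', mul_mem hg hg', fun z => ?_⟩
    have h1 : (g * g') z = g (g' z) := rfl
    rw [h1, hg'z z, hgz, mul_pow, ← pow_mul, ← pow_add, Nat.add_comm k' k]
    ring
  have SFinv : ∀ {a : F} {k : ℕ}, scalarFrob G p a k →
      scalarFrob G p ((a⁻¹) ^ p ^ (d - k % d)) (d - k % d) := by
    rintro a k hSF
    have ha := SFne hSF
    obtain ⟨g, hg, hgz⟩ := hSF
    have hkk' : (k + (d - k % d)) ≡ 0 [MOD d] := by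
      rw [Nat.modEq_zero_iff_dvd]
      have h1 : k % d < d := Nat.mod_lt _ hd
      have h2 := Nat.div_add_mod k d
      refine ⟨k / d + 1, ?_⟩
      have h3 : d * (k / d + 1) = d * (k / d) + d := by ring
      omega
    refine ⟨g⁻¹, inv_mem hg, fun z => ?_⟩
    apply g.injective
    rw [← Equiv.Perm.mul_apply, mul_inv_cancel, Equiv.Perm.one_apply, hgz, ← mul_pow, ← pow_mul, ← pow_add]
    have h4 : ((d - k % d) + k) ≡ 0 [MOD d] := by rwa [Nat.add_comm] at hkk'
    rw [hpow_congr h4 (a⁻¹ * z)]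
    simp only [pow_zero, pow_one]
    field_simp
  have Hmul0 : ∀ {a b : F}, scalarFrob G p a 0 → scalarFrob G p b 0 →
      scalarFrob G p (a * b) 0 := by
    intro a b ha hb
    have := SFmul ha hb
    simpa using this
  have Hpow0 : ∀ {a : F}, scalarFrob G p a 0 → ∀ n : ℕ, scalarFrob G p (a ^ n) 0 := by
    intro a ha n
    induction n with
    | zero => simpa using SFone
    | succ n ih => rw [pow_succ]; exact Hmul0 ih ha
  have Hinv0 : ∀ {a : F}, scalarFrob G p a 0 → scalarFrob G p a⁻¹ 0 := by
    intro a ha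
    have h1 := SFinv ha
    simp only [Nat.zero_mod, Nat.sub_zero] at h1
    have h2 : (a⁻¹) ^ p ^ d = a⁻¹ := hpowd _
    rw [h2] at h1
    exact SFcongr (Nat.modEq_zero_iff_dvd.mpr dvd_rfl) h1
  have Hcancel : ∀ {a b : F} {k : ℕ}, scalarFrob G p b 0 → scalarFrob G p a k →
      scalarFrob G p (b * a) k := by
    intro a b k hb ha
    have := SFmul hb ha
    simpa using this
  -- ===== Stage 3 : exponent lattice, s and m =====
  obtain ⟨cs, hcspos, hcsd, hE⟩ :
      ∃ cs, 0 < cs ∧ cs ∣ d ∧ ∀ k, (∃ a : F, scalarFrob G p a k) ↔ cs ∣ k := by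
    obtain ⟨c, h1, h2, h3⟩ := exists_divisor (Q := d)
      (T := {k : ℕ | ∃ a : F, scalarFrob G p a k}) hd
      (by
        intro n
        constructor
        · rintro ⟨a, ha⟩
          exact ⟨a, SFcongr (by simpa [Nat.ModEq] using (Nat.add_mod_right n d)) ha⟩
        · rintro ⟨a, ha⟩
          exact ⟨a, SFcongr (by simpa [Nat.ModEq] using (Nat.add_mod_right n d).symm) ha⟩)
      ⟨1, SFone⟩
      (by
        rintro a ⟨x, hx⟩ b ⟨y, hy⟩
        exact ⟨_, SFmul hx hy⟩)
      (by
        rintro n ⟨a, ha⟩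
        refine ⟨d - n % d, ⟨_, SFinv ha⟩, ?_⟩
        have h1 : n % d < d := Nat.mod_lt _ hd
        have h2 := Nat.div_add_mod n d
        refine ⟨n / d + 1, ?_⟩
        have h3 : d * (n / d + 1) = d * (n / d) + d := by ring
        omega)
    exact ⟨c, h1, h2, fun k => h3 k⟩
  have hcs_s : cs = s := by
    have h1 : cs ∣ s := (hE s).mp ⟨hs.1.2.choose, hs.1.2.choose_spec.2⟩
    have h2 : s ≤ cs := by
      obtain ⟨a, ha⟩ := (hE cs).mpr dvd_rfl
      exact hs.2 ⟨hcspos, a, SFne ha, ha⟩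
    have := Nat.le_of_dvd spos h1
    omega
  rw [hcs_s] at hE hcsd
  have sdvd : ∀ {a : F} {k : ℕ}, scalarFrob G p a k → s ∣ k :=
    fun {a k} h => (hE k).mp ⟨a, h⟩
  have hsd : s ∣ d := hcsd
  have hsled : s ≤ d := Nat.le_of_dvd hd hsd
  set D : ℕ := d / s with hDdef
  have hDpos : 0 < D := Nat.div_pos hsled spos
  have hsD : s * D = d := Nat.mul_div_cancel' hsd
  obtain ⟨cm, hcmpos, hcmD, hM⟩ :
      ∃ cm, 0 < cm ∧ cm ∣ D ∧ ∀ k, scalarFrob G p 1 (k * s) ↔ cm ∣ k := by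
    obtain ⟨c, h1, h2, h3⟩ := exists_divisor (Q := D)
      (T := {k : ℕ | scalarFrob G p 1 (k * s)}) hDpos
      (by
        intro n
        have heq : (n + D) * s = n * s + d := by
          rw [Nat.add_mul]
          congr 1
          rw [← hsD]; ring
        constructor
        · intro hx
          have hx2 : scalarFrob G p 1 (n * s + d) := by
            have : scalarFrob G p 1 ((n + D) * s) := hx
            rwa [heq] at this
          exact SFcongr (by simpa [Nat.ModEq] using (Nat.add_mod_right (n*s) d)) hx2
        · intro hx
          show scalarFrob G p 1 ((n + D) * s)
          rw [heq]
          exact SFcongr (by simpa [Nat.ModEq] using (Nat.add_mod_right (n*s) d).symm) hx)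
      (by
        show scalarFrob G p 1 (0 * s)
        simpa using SFone)
      (by
        intro a ha b hb
        show scalarFrob G p 1 ((a + b) * s)
        have := SFmul (a := 1) ha hb
        simpa [Nat.add_mul] using this)
      (by
        intro a ha
        have h1 := SFinv ha
        have hsw : s ∣ d - (a * s) % d := by
          have h2 : (a * s) % d = a * s - d * (a * s / d) := by
            have := Nat.div_add_mod (a * s) d; omega
          have h3 : s ∣ (a * s) % d := by
            rw [h2]
            exact Nat.dvd_sub ⟨a, Nat.mul_comm a s⟩ (Dvd.dvd.mul_right hsd _)
          exact Nat.dvd_sub hsd h3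
        refine ⟨(d - (a * s) % d) / s, ?_, ?_⟩
        · show scalarFrob G p 1 ((d - (a * s) % d) / s * s)
          rw [Nat.div_mul_cancel hsw]
          simpa using h1
        · have h2 := Nat.div_add_mod (a * s) d
          have h4 : (a*s) % d < d := Nat.mod_lt _ hd
          refine ⟨a * s / d + 1, ?_⟩
          apply Nat.eq_of_mul_eq_mul_left spos
          have h5 : s * (a + (d - (a * s) % d) / s) = s * a + (d - (a * s) % d) := by
            rw [Nat.mul_add, Nat.mul_div_cancel' hsw]
          have h6 : s * (D * (a * s / d + 1)) = d * (a * s / d) + d := by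
            rw [← Nat.mul_assoc, hsD]; ring
          have h7 : s * a = a * s := Nat.mul_comm _ _
          omega)
    exact ⟨c, h1, h2, fun k => h3 k⟩
  have hcm_m : cm = m := by
    have h1 : cm ∣ m := (hM m).mp hm.1.2
    have h2 : m ≤ cm := hm.2 ⟨hcmpos, (hM cm).mpr dvd_rfl⟩
    have := Nat.le_of_dvd mpos h1
    omega
  rw [hcm_m] at hM hcmD
  have mdvd : ∀ {k}, scalarFrob G p 1 (k * s) → m ∣ k := fun {k} h => (hM k).mp h
  have msf : ∀ {k}, m ∣ k → scalarFrob G p 1 (k * s) := fun {k} h => (hM k).mpr h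
  have mD : m ∣ D := hcmD
  have hπ2 : 2 ≤ p ^ s := by
    calc 2 = 2 ^ 1 := by norm_num
    _ ≤ 2 ^ s := Nat.pow_le_pow_right (by norm_num) spos
    _ ≤ p ^ s := Nat.pow_le_pow_left hp2 s
  have hπD1 : (p ^ s) ^ D ≡ 1 [MOD Q] := by
    have h1 : (p ^ s) ^ D = p ^ d := by rw [← pow_mul, hsD]
    have h2 : p ^ d = Q + 1 := by omega
    rw [h1, h2]
    show (Q + 1) % Q = 1 % Q
    rw [Nat.add_comm]
    exact Nat.add_mod_right 1 Q
  -- ===== Stage 4 : structure of G₀ (Lemma 3.8) =====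
  have Hfs : ∀ {h : F}, scalarFrob G p h 0 → ∃ h₁, scalarFrob G p h₁ 0 ∧ h₁ ^ p ^ s = h := by
    intro h hh
    refine ⟨h ^ p ^ (d - s), Hpow0 hh _, ?_⟩
    rw [← pow_mul, ← pow_add, Nat.sub_add_cancel hsled]
    exact hpowd h
  have hH1' : ∀ b : F, scalarFrob G p b s ↔ ∃ h, scalarFrob G p h 0 ∧ b = h * ξ ^ l := by
    intro b
    constructor
    · intro hb
      have h1 : b ∈ {a : F | scalarFrob G p a s} := hb
      rw [hH1] at h1
      obtain ⟨h, hh, hbe⟩ := h1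
      exact ⟨h, hh, hbe.symm⟩
    · rintro ⟨h, hh, rfl⟩
      have h1 : h * ξ ^ l ∈ (fun h : F => h * ξ ^ l) '' {a | scalarFrob G p a 0} :=
        ⟨h, hh, rfl⟩
      rw [← hH1] at h1
      exact h1
  have hbs : scalarFrob G p (ξ ^ l) s := (hH1' _).mpr ⟨1, SFone, (one_mul _).symm⟩
  have Hk : ∀ (k : ℕ) (a : F), scalarFrob G p a (k * s) ↔
      ∃ h, scalarFrob G p h 0 ∧ a = h * ξ ^ (l * gs (p ^ s) k) := by
    intro k
    induction k with
    | zero =>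
        intro a
        constructor
        · intro ha
          exact ⟨a, by simpa using ha, by simp [gs_zero]⟩
        · rintro ⟨h, hh, rfl⟩
          simpa [gs_zero] using hh
    | succ k ih =>
        intro a
        constructor
        · intro ha
          have hbinv := SFinv hbs
          have hss' : (s + (d - s % d)) ≡ 0 [MOD d] := by
            rw [Nat.modEq_zero_iff_dvd]
            have h1 : s % d < d := Nat.mod_lt _ hd
            have h2 := Nat.div_add_mod s d
            refine ⟨s / d + 1, ?_⟩
            have h3 : d * (s / d + 1) = d * (s / d) + d := by ring
            omega
          have h4 : ((d - s % d) + s) ≡ 0 [MOD d] := by rwa [Nat.add_comm] at hss'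
          have hcomb := SFmul hbinv ha
          have hexp : ((d - s % d) + (k+1) * s) ≡ k * s [MOD d] := by
            have heq : (d - s % d) + (k+1) * s = ((d - s % d) + s) + k * s := by ring
            rw [heq]
            have h5 := Nat.ModEq.add_right (k * s) h4
            simpa using h5
          have hc := SFcongr hexp hcomb
          obtain ⟨h, hh, hce⟩ := (ih _).mp hc
          refine ⟨h ^ p ^ s, Hpow0 hh _, ?_⟩
          have hcpow : (((ξ ^ l)⁻¹ ^ p ^ (d - s % d)) * a ^ p ^ (d - s % d)) ^ p ^ s
              = (ξ ^ l)⁻¹ * a := by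
            rw [← mul_pow, ← pow_mul, ← pow_add]
            rw [hpow_congr h4 ((ξ ^ l)⁻¹ * a)]
            simp
          have hane : (ξ : F) ^ l ≠ 0 := pow_ne_zero _ hξ0
          have ha2 : a = ξ ^ l * ((((ξ ^ l)⁻¹ ^ p ^ (d - s % d)) * a ^ p ^ (d - s % d)) ^ p ^ s) := by
            rw [hcpow]
            field_simp
          rw [hce] at ha2
          rw [ha2]
          have hexp2 : l * gs (p ^ s) (k+1) = l + l * gs (p ^ s) k * p ^ s := by
            rw [gs_succ']; ring
          rw [mul_pow, ← pow_mul, hexp2, pow_add]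
          ring
        · rintro ⟨h, hh, rfl⟩
          obtain ⟨h₁, hh₁, hh₁e⟩ := Hfs hh
          have hc : scalarFrob G p (h₁ * ξ ^ (l * gs (p ^ s) k)) (k * s) :=
            (ih _).mpr ⟨h₁, hh₁, rfl⟩
          have hcomb := SFmul hbs hc
          have hval : ξ ^ l * (h₁ * ξ ^ (l * gs (p ^ s) k)) ^ p ^ s
              = h * ξ ^ (l * gs (p ^ s) (k+1)) := by
            have hexp2 : l * gs (p ^ s) (k+1) = l + l * gs (p ^ s) k * p ^ s := by
              rw [gs_succ']; ring
            rw [mul_pow, ← pow_mul, hh₁e, hexp2, pow_add]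
            ring
          have hexp3 : s + k * s = (k + 1) * s := by ring
          rw [hval, hexp3] at hcomb
          exact hcomb
  -- ===== Stage 5 : H = ⟨ξ^m⟩ (the counting argument) =====
  obtain ⟨cH, hcHpos, hcHQ, hTHspec⟩ :
      ∃ cH, 0 < cH ∧ cH ∣ Q ∧ ∀ n, scalarFrob G p (ξ ^ n) 0 ↔ cH ∣ n := by
    obtain ⟨c, h1, h2, h3⟩ := exists_divisor (Q := Q)
      (T := {n : ℕ | scalarFrob G p (ξ ^ n) 0}) hQpos
      (by
        intro n
        show scalarFrob G p (ξ ^ (n + Q)) 0 ↔ scalarFrob G p (ξ ^ n) 0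
        rw [pow_add, hxiQ1, mul_one])
      (by
        show scalarFrob G p (ξ ^ 0) 0
        simpa using SFone)
      (by
        intro a ha b hb
        show scalarFrob G p (ξ ^ (a + b)) 0
        rw [pow_add]
        exact Hmul0 ha hb)
      (by
        intro a ha
        have hle : a + 1 ≤ Q * (a + 1) := Nat.le_mul_of_pos_left _ hQpos
        refine ⟨Q * (a + 1) - a, ?_, ⟨a + 1, by omega⟩⟩
        show scalarFrob G p (ξ ^ (Q * (a+1) - a)) 0
        have h1 : (ξ : F) ^ (Q * (a+1) - a) * ξ ^ a = 1 := by
          rw [← pow_add]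
          have h3 : Q * (a+1) - a + a = Q * (a+1) := by omega
          rw [h3, pow_mul, hxiQ1, one_pow]
        have h2 : (ξ : F) ^ (Q * (a+1) - a) = (ξ ^ a)⁻¹ := eq_inv_of_mul_eq_one_left h1
        rw [h2]
        exact Hinv0 ha)
    exact ⟨c, h1, h2, fun n => h3 n⟩
  have COPQ : Nat.Coprime (p ^ s) Q := coprime_of_pow_modEq_one _ D Q hDpos hπD1
  have hlgsH : ∀ k, m ∣ k → cH ∣ l * gs (p ^ s) k := by
    intro k hk
    have h4 := msf hk
    obtain ⟨h', hh', h1e⟩ := (Hk k 1).mp h4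
    have h5 : (ξ : F) ^ (l * gs (p ^ s) k) = h'⁻¹ :=
      (inv_eq_of_mul_eq_one_right h1e.symm).symm
    refine (hTHspec _).mp ?_
    rw [h5]
    exact Hinv0 hh'
  have hHto1 : ∀ u, cH ∣ l * gs (p ^ s) u → m ∣ u := by
    intro u hu
    have h4 : scalarFrob G p (ξ ^ (l * gs (p ^ s) u)) 0 := (hTHspec _).mpr hu
    have h5 : scalarFrob G p (ξ ^ (l * gs (p ^ s) u)) (u * s) :=
      (Hk u _).mpr ⟨1, SFone, (one_mul _).symm⟩
    have h7 := Hcancel (Hinv0 h4) h5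
    have h8 : (ξ ^ (l * gs (p ^ s) u))⁻¹ * ξ ^ (l * gs (p ^ s) u) = 1 :=
      inv_mul_cancel₀ (pow_ne_zero _ hξ0)
    rw [h8] at h7
    exact mdvd h7
  have DIST : ∀ k k', k < m → k' < m →
      (l * gs (p ^ s) k) ≡ (l * gs (p ^ s) k') [MOD cH] → k = k' := by
    have aux : ∀ k k', k ≤ k' → k' < m →
        (l * gs (p ^ s) k) ≡ (l * gs (p ^ s) k') [MOD cH] → k = k' := by
      intro k k' hkk' hk'm hcong
      obtain ⟨u, rfl⟩ : ∃ u, k' = k + u := ⟨k' - k, by omega⟩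
      have hgseq : l * gs (p ^ s) (k + u) = l * gs (p ^ s) k + (p^s)^k * (l * gs (p^s) u) := by
        rw [gs_add]; ring
      have hle : l * gs (p^s) k ≤ l * gs (p^s) (k+u) := by omega
      have h1 : cH ∣ (p^s)^k * (l * gs (p^s) u) := by
        have h2 := (Nat.modEq_iff_dvd' hle).mp hcong
        have h3 : l * gs (p^s) (k+u) - l * gs (p^s) k = (p^s)^k * (l * gs (p^s) u) := by omega
        rwa [h3] at h2
      have hcopH : Nat.Coprime cH ((p^s)^k) :=
        ((Nat.Coprime.coprime_dvd_right hcHQ COPQ).symm.pow_right k)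
      have h3 : cH ∣ l * gs (p^s) u := hcopH.dvd_of_dvd_mul_left h1
      have h9 : m ∣ u := hHto1 u h3
      have hu0 : u = 0 := by
        rcases Nat.eq_zero_or_pos u with h | h
        · exact h
        · exfalso
          have := Nat.le_of_dvd h h9
          omega
      omega
    intro k k' hk hk' hcong
    rcases Nat.le_total k k' with h | h
    · exact aux k k' h hk' hcong
    · exact (aux k' k h hk hcong.symm).symm
  have COVER : ∀ n : ℕ, ∃ k, k < m ∧ ∃ t, n ≡ l * gs (p^s) k + cH * t [MOD Q] := by
    intro n
    have hz : (ξ : F) ^ n ≠ 0 := pow_ne_zero _ hξ0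
    obtain ⟨g, hg, hg0, hg1⟩ := h2trans 0 1 0 (ξ ^ n) (zero_ne_one) (Ne.symm hz)
    obtain ⟨a, c₂, k₀, hgz⟩ := hAGL g hg
    have hpk₀ : (p:ℕ) ^ k₀ ≠ 0 := (pow_pos (by omega : 0 < p) k₀).ne'
    have hc₂ : c₂ = 0 := by
      have h1 := hgz 0
      rw [hg0, zero_pow hpk₀, mul_zero, zero_add] at h1
      exact h1.symm
    have hSFa : scalarFrob G p a k₀ := ⟨g, hg, fun z => by rw [hgz z, hc₂, add_zero]⟩
    obtain ⟨k₁, hk₁⟩ := sdvd hSFa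
    have hSFa' : scalarFrob G p a (k₁ * s) := by rwa [hk₁, Nat.mul_comm] at hSFa
    obtain ⟨h, hh, hae⟩ := (Hk k₁ a).mp hSFa'
    obtain ⟨nn, hnn⟩ := hξgen h (SFne hh)
    have hnnTH : cH ∣ nn := (hTHspec nn).mp (by rwa [hnn])
    have h2 : a = ξ ^ n := by
      have h1 : g 1 = a := by rw [hgz 1, hc₂]; simp
      rw [← h1, hg1]
    have hmod : n ≡ nn + l * gs (p^s) k₁ [MOD Q] := by
      apply (hxipow _ _).mp
      calc (ξ:F) ^ n = a := h2.symm
        _ = h * ξ ^ (l * gs (p^s) k₁) := hae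
        _ = ξ ^ nn * ξ ^ (l * gs (p^s) k₁) := by rw [hnn]
        _ = ξ ^ (nn + l * gs (p^s) k₁) := (pow_add ξ nn _).symm
    have hsplit : l * gs (p^s) k₁ =
        l * gs (p^s) (k₁ % m) + (p^s)^(k₁ % m) * (l * gs (p^s) (m * (k₁ / m))) := by
      conv_lhs => rw [← Nat.mod_add_div k₁ m]
      rw [gs_add]; ring
    obtain ⟨tX, htX⟩ := hlgsH (m * (k₁ / m)) ⟨k₁/m, rfl⟩
    obtain ⟨t₁, ht₁⟩ := hnnTH
    refine ⟨k₁ % m, Nat.mod_lt _ mpos, t₁ + (p^s)^(k₁ % m) * tX, ?_⟩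
    have hfin : nn + l * gs (p^s) k₁
        = l * gs (p^s) (k₁ % m) + cH * (t₁ + (p^s)^(k₁ % m) * tX) := by
      rw [hsplit, htX, ht₁]; ring
    rw [← hfin]
    exact hmod
  have hcHm : cH = m := by
    have hQcH : cH * (Q / cH) = Q := Nat.mul_div_cancel' hcHQ
    have hQcHpos : 0 < Q / cH := Nat.div_pos (Nat.le_of_dvd hQpos hcHQ) hcHpos
    have hmaps : ∀ y ∈ Finset.range m ×ˢ Finset.range (Q / cH),
        (l * gs (p^s) y.1 + cH * y.2) % Q ∈ Finset.range Q := by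
      intro y hy
      simp only [Finset.mem_range]
      exact Nat.mod_lt _ hQpos
    have hinj : Set.InjOn (fun y : ℕ × ℕ => (l * gs (p^s) y.1 + cH * y.2) % Q)
        ↑(Finset.range m ×ˢ Finset.range (Q / cH)) := by
      rintro ⟨k, t⟩ hkt ⟨k', t'⟩ hkt' hf
      simp only [Finset.coe_product, Set.mem_prod, Finset.mem_coe, Finset.mem_range] at hkt hkt'
      simp only at hf
      have h1 : l * gs (p^s) k + cH * t ≡ l * gs (p^s) k' + cH * t' [MOD Q] := hf
      have h2 := Nat.ModEq.of_dvd hcHQ h1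
      have h3 : l * gs (p^s) k ≡ l * gs (p^s) k' [MOD cH] := by
        unfold Nat.ModEq at h2 ⊢
        rwa [Nat.add_mul_mod_self_left, Nat.add_mul_mod_self_left] at h2
      have hk_eq : k = k' := DIST _ _ hkt.1 hkt'.1 h3
      subst hk_eq
      have h4 : cH * t ≡ cH * t' [MOD Q] := Nat.ModEq.add_left_cancel' _ h1
      have h5 : cH * t < Q := by
        calc cH * t < cH * (Q / cH) := (Nat.mul_lt_mul_left hcHpos).mpr hkt.2
          _ = Q := hQcH
      have h6 : cH * t' < Q := by
        calc cH * t' < cH * (Q / cH) := (Nat.mul_lt_mul_left hcHpos).mpr hkt'.2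
          _ = Q := hQcH
      have h7 : cH * t = cH * t' := by
        unfold Nat.ModEq at h4
        rwa [Nat.mod_eq_of_lt h5, Nat.mod_eq_of_lt h6] at h4
      have : t = t' := Nat.eq_of_mul_eq_mul_left hcHpos h7
      simp [this]
    have hsurj : Set.SurjOn (fun y : ℕ × ℕ => (l * gs (p^s) y.1 + cH * y.2) % Q)
        ↑(Finset.range m ×ˢ Finset.range (Q / cH)) ↑(Finset.range Q) := by
      intro n hn
      simp only [Finset.coe_range, Set.mem_Iio] at hn
      obtain ⟨k, hk, t, ht⟩ := COVER n
      refine ⟨(k, t % (Q / cH)), ?_, ?_⟩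
      · simp only [Finset.coe_product, Set.mem_prod, Finset.mem_coe, Finset.mem_range]
        exact ⟨hk, Nat.mod_lt _ hQcHpos⟩
      · show (l * gs (p^s) k + cH * (t % (Q / cH))) % Q = n
        have h1 : cH * (t % (Q/cH)) ≡ cH * t [MOD Q] := by
          have := (Nat.mod_modEq t (Q/cH)).mul_left' (c := cH)
          rwa [hQcH] at this
        have h2 : l * gs (p^s) k + cH * (t % (Q/cH)) ≡ n [MOD Q] :=
          (Nat.ModEq.add_left _ h1).trans ht.symm
        unfold Nat.ModEq at h2
        rwa [Nat.mod_eq_of_lt hn] at h2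
    have hcard1 : (Finset.range m ×ˢ Finset.range (Q / cH)).card = m * (Q / cH) := by
      simp
    have hle1 : (Finset.range Q).card ≤ (Finset.range m ×ˢ Finset.range (Q / cH)).card :=
      Finset.card_le_card_of_surjOn _ hsurj
    have hle2 : (Finset.range m ×ˢ Finset.range (Q / cH)).card ≤ (Finset.range Q).card :=
      Finset.card_le_card_of_injOn _ hmaps hinj
    have heq2 : m * (Q / cH) = Q := by
      rw [← hcard1]
      simp only [Finset.card_range] at hle1 hle2
      omega
    have heq3 : m * (Q / cH) = cH * (Q / cH) := by rw [heq2, hQcH]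
    exact (Nat.eq_of_mul_eq_mul_right hQcHpos heq3).symm
  have HXI : ∀ nn : ℕ, scalarFrob G p (ξ ^ nn) 0 ↔ m ∣ nn := by
    intro nn
    rw [← hcHm]
    exact hTHspec nn
  have mQ : m ∣ Q := hcHm ▸ hcHQ
  have CONG : ∀ k, m ∣ l * gs (p ^ s) k ↔ m ∣ k := by
    intro k
    constructor
    · intro hk
      exact hHto1 k (hcHm ▸ hk)
    · intro hk
      exact hcHm ▸ hlgsH k hk
  -- ===== Stage 6 : normal form of elements of G₀ =====
  have hppk : ∀ k : ℕ, (p:ℕ) ^ (k * s) = (p ^ s) ^ k := by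
    intro k
    rw [← pow_mul, Nat.mul_comm]
  have M1 : ∀ g ∈ G, g 0 = 0 → ∃ (k cc : ℕ),
      (∀ z : F, g z = ξ ^ cc * z ^ (p^s) ^ k) ∧ cc ≡ l * gs (p^s) k [MOD m] := by
    intro g hg hg0
    obtain ⟨a, c₂, k₀, hgz⟩ := hAGL g hg
    have hpk₀ : (p:ℕ) ^ k₀ ≠ 0 := (pow_pos (by omega : 0 < p) k₀).ne'
    have hc₂ : c₂ = 0 := by
      have h1 := hgz 0
      rw [hg0, zero_pow hpk₀, mul_zero, zero_add] at h1
      exact h1.symm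
    have hSFa : scalarFrob G p a k₀ := ⟨g, hg, fun z => by rw [hgz z, hc₂, add_zero]⟩
    obtain ⟨k₁, hk₁⟩ := sdvd hSFa
    have hSFa' : scalarFrob G p a (k₁ * s) := by rwa [hk₁, Nat.mul_comm] at hSFa
    obtain ⟨h, hh, hae⟩ := (Hk k₁ a).mp hSFa'
    obtain ⟨nn, hnn⟩ := hξgen h (SFne hh)
    have hmnn : m ∣ nn := (HXI nn).mp (by rwa [hnn])
    obtain ⟨t₁, ht₁⟩ := hmnn
    refine ⟨k₁, nn + l * gs (p^s) k₁, fun z => ?_, ?_⟩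
    · rw [hgz z, hc₂, add_zero, hae, ← hnn, pow_add]
      have hzz : z ^ p ^ k₀ = z ^ (p^s) ^ k₁ := by
        rw [← hppk k₁, hk₁, Nat.mul_comm]
      rw [hzz]
    · rw [ht₁]
      show (m * t₁ + l * gs (p^s) k₁) % m = (l * gs (p^s) k₁) % m
      exact Nat.mul_add_mod m t₁ _
  have M2 : ∀ (k cc : ℕ), cc ≡ l * gs (p^s) k [MOD m] →
      scalarFrob G p (ξ ^ cc) (k * s) := by
    intro k cc hcc
    have h1 : l * gs (p^s) k ≤ cc + Q * (l * gs (p^s) k + 1) := by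
      have := Nat.le_mul_of_pos_left (l * gs (p^s) k + 1) hQpos
      omega
    have h2 : cc + Q * (l * gs (p^s) k + 1) ≡ l * gs (p^s) k [MOD m] := by
      have h3 : cc + Q * (l * gs (p^s) k + 1) ≡ cc [MOD m] := by
        obtain ⟨w, hw⟩ := mQ
        rw [hw]
        show (cc + m * w * (l * gs (p^s) k + 1)) % m = cc % m
        rw [Nat.mul_assoc]
        exact Nat.add_mul_mod_self_left cc m _
      exact h3.trans hcc
    obtain ⟨tt, htt⟩ := (Nat.modEq_iff_dvd' h1).mp h2.symm
    have h3 : scalarFrob G p (ξ ^ (m * tt) * ξ ^ (l * gs (p^s) k)) (k * s) :=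
      Hcancel ((HXI _).mpr (Dvd.intro tt rfl)) ((Hk k _).mpr ⟨1, SFone, (one_mul _).symm⟩)
    have h4 : (ξ:F) ^ (m*tt) * ξ ^ (l * gs (p^s) k) = ξ ^ cc := by
      rw [← pow_add]
      apply (hxipow _ _).mpr
      have h5 : m * tt + l * gs (p^s) k = cc + Q * (l * gs (p^s) k + 1) := by omega
      rw [h5]
      show (cc + Q * (l * gs (p^s) k + 1)) % Q = cc % Q
      exact Nat.add_mul_mod_self_left cc Q _
    rwa [h4] at h3
  have TRANSn : ∀ n : ℕ, ∃ k cc : ℕ, cc ≡ l * gs (p^s) k [MOD m] ∧ cc ≡ n [MOD Q] := by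
    intro n
    have hz : (ξ : F) ^ n ≠ 0 := pow_ne_zero _ hξ0
    obtain ⟨g, hg, hg0, hg1⟩ := h2trans 0 1 0 (ξ ^ n) (zero_ne_one) (Ne.symm hz)
    obtain ⟨k, cc, hgz, hcc⟩ := M1 g hg hg0
    refine ⟨k, cc, hcc, ?_⟩
    apply (hxipow _ _).mp
    have h1 : g 1 = ξ ^ cc := by rw [hgz 1]; simp
    rw [← h1, hg1]
  have Hset : {a : F | scalarFrob G p a 0} = {a : F | ∃ t, a = ξ ^ (m * t)} := by
    ext a
    constructor
    · intro ha
      obtain ⟨nn, hnn⟩ := hξgen a (SFne ha)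
      have h1 : m ∣ nn := (HXI nn).mp (by rwa [hnn])
      obtain ⟨t, rfl⟩ := h1
      exact ⟨t, hnn.symm⟩
    · rintro ⟨t, rfl⟩
      exact (HXI _).mpr (Dvd.intro t rfl)
  have ncardH : Set.ncard {a : F | scalarFrob G p a 0} = Q / m := by
    rw [Hset, hQdef]
    exact ncard_pows ξ hξ0 hξgen m mpos (hQdef ▸ mQ)
  -- ===== Stage 7 : translation to exponent sets =====
  set A : Set ℕ := {n : ℕ | ξ ^ n ∈ P} with hAdef
  have hA0 : 0 ∈ A := by
    show (ξ : F) ^ 0 ∈ P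
    simpa using hP1
  have hAper : ∀ n, n + Q ∈ A ↔ n ∈ A := by
    intro n
    show ξ ^ (n + Q) ∈ P ↔ ξ ^ n ∈ P
    rw [pow_add, hxiQ1, mul_one]
  have hPA : ∀ v ∈ P, ∃ n, n ∈ A ∧ v = ξ ^ n := by
    intro v hv
    obtain ⟨n, hn⟩ := hξgen v (hP0 v hv)
    refine ⟨n, ?_, hn.symm⟩
    show ξ ^ n ∈ P
    rw [hn]
    exact hv
  have TL : (∀ g ∈ G, g 0 = 0 → (⇑g '' P = P ∨ (⇑g '' P) ∩ P = ∅)) ↔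
      (∀ k c, c ≡ l * gs (p^s) k [MOD m] →
        ((∀ n ∈ A, c + (p^s) ^ k * n ∈ A) ∨ (∀ n ∈ A, c + (p^s) ^ k * n ∉ A))) := by
    constructor
    · intro hL k cc hcc
      obtain ⟨g, hg, hgz⟩ := M2 k cc hcc
      have hg0 : g 0 = 0 := by
        rw [hgz 0, zero_pow ((pow_pos (by omega : 0 < p) (k*s)).ne'), mul_zero]
      have hgξ : ∀ n : ℕ, g (ξ ^ n) = ξ ^ (cc + (p^s)^k * n) := by
        intro n
        rw [hgz (ξ^n), ← pow_mul, ← pow_add, hppk k, Nat.mul_comm n _]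
      rcases hL g hg hg0 with heq | hdis
      · left
        intro n hn
        have h1 : g (ξ ^ n) ∈ ⇑g '' P := ⟨ξ^n, hn, rfl⟩
        rw [heq, hgξ n] at h1
        exact h1
      · right
        intro n hn hmem
        have h1 : (ξ:F) ^ (cc + (p^s)^k * n) ∈ (⇑g '' P) ∩ P := ⟨⟨ξ^n, hn, hgξ n⟩, hmem⟩
        rw [hdis] at h1
        exact h1
    · intro hLs g hg hg0
      obtain ⟨k, cc, hgz, hcc⟩ := M1 g hg hg0
      have hgξ : ∀ n : ℕ, g (ξ ^ n) = ξ ^ (cc + (p^s)^k * n) := by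
        intro n
        rw [hgz (ξ^n), ← pow_mul, ← pow_add, Nat.mul_comm n _]
      rcases hLs k cc hcc with hmaps | hdis
      · left
        have hsub : ⇑g '' P ⊆ P := by
          rintro _ ⟨v, hv, rfl⟩
          obtain ⟨n, hnA, rfl⟩ := hPA v hv
          rw [hgξ n]
          exact hmaps n hnA
        have hfin : P.Finite := Set.toFinite P
        have hcard2 : P.ncard ≤ (⇑g '' P).ncard := by
          rw [Set.ncard_image_of_injective P g.injective]
        exact Set.eq_of_subset_of_ncard_le hsub hcard2 hfin
      · right
        rw [Set.eq_empty_iff_forall_notMem]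
        rintro x ⟨⟨v, hv, rfl⟩, hxP⟩
        obtain ⟨n, hnA, rfl⟩ := hPA v hv
        rw [hgξ n] at hxP
        exact hdis n hnA hxP
  have hgsdiv1 : ∀ e : ℕ, (p ^ (s * e) - 1) / (p ^ s - 1) = gs (p^s) e := by
    intro e
    rw [pow_mul]
    exact gs_div (p^s) e hπ2
  have hgsdiv2 : ∀ (e : ℕ), 0 < e → ∀ i : ℕ,
      (p ^ (e * s * i) - 1) / (p ^ (e * s) - 1) = gs ((p^s)^e) i := by
    intro e he i
    have h1 : (p:ℕ) ^ (e * s) = (p^s)^e := by rw [← pow_mul, Nat.mul_comm e s]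
    rw [pow_mul, h1]
    refine gs_div _ _ ?_
    calc 2 ≤ p ^ s := hπ2
      _ = (p^s)^1 := (pow_one _).symm
      _ ≤ ((p^s)^e) := Nat.pow_le_pow_right (by omega) he
  have CORE := core (p^s) Q m l D hπ2 hQpos mpos mQ hDpos mD hπD1 CONG A hA0 hAper TRANSn
  -- ===== Stage 8 : final assembly =====
  constructor
  · intro hL
    right
    obtain ⟨e, hepos, hem, r, hrpos, hmrQ, j, n₀, hj, hrdvd, hAchar⟩ := CORE.mp (TL.mp hL)
    obtain ⟨Q', hQ'⟩ := hmrQ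
    have hQ'pos : 0 < Q' := by
      rcases Nat.eq_zero_or_pos Q' with rfl | h
      · simp at hQ'; omega
      · exact h
    have hmrpos : 0 < m * r := Nat.mul_pos mpos hrpos
    refine ⟨n₀, e, hepos, hem, {a : F | ∃ t, a = ξ ^ (m * r * t)}, ?_, ?_, ?_, ?_, j, ?_, ?_, ?_⟩
    · rintro _ ⟨t, rfl⟩
      exact (HXI _).mpr ⟨r * t, by ring⟩
    · exact ⟨0, by simp⟩
    · rintro _ ⟨t, rfl⟩ _ ⟨t', rfl⟩
      exact ⟨t + t', by rw [← pow_add, Nat.mul_add]⟩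
    · rintro _ ⟨t, rfl⟩
      refine ⟨Q' * (t + 1) - t, ?_⟩
      have h1 : t + 1 ≤ Q' * (t + 1) := Nat.le_mul_of_pos_left _ hQ'pos
      have h2 : m * r * (Q' * (t+1)) = Q * (t+1) := by rw [hQ']; ring
      have h3 : m * r * t ≤ m * r * (Q' * (t+1)) :=
        Nat.mul_le_mul_left _ (by omega)
      have h4 : m * r * (Q' * (t+1) - t) = Q * (t+1) - m * r * t := by
        rw [Nat.mul_sub, h2]
      have h5 : (ξ:F) ^ (m * r * (Q' * (t+1) - t)) * ξ ^ (m * r * t) = 1 := by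
        rw [← pow_add, h4]
        have h6 : Q * (t+1) - m*r*t + m*r*t = Q * (t+1) := by omega
        rw [h6, pow_mul, hxiQ1, one_pow]
      exact (eq_inv_of_mul_eq_one_left h5).symm
    · rw [hgsdiv1 e]
      exact hj
    · rw [hgsdiv2 e hepos, ncardH]
      have hncK : Set.ncard {a : F | ∃ t, a = ξ ^ (m * r * t)} = Q / (m * r) := by
        rw [hQdef]
        exact ncard_pows ξ hξ0 hξgen (m*r) hmrpos (hQdef ▸ ⟨Q', hQ'⟩)
      rw [hncK]
      have h1 : Q / m = r * Q' := by
        rw [hQ', Nat.mul_assoc]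
        exact Nat.mul_div_cancel_left _ mpos
      have h2 : Q / (m*r) = Q' := by
        rw [hQ']
        exact Nat.mul_div_cancel_left _ hmrpos
      rw [h1, h2, Nat.mul_div_cancel _ hQ'pos]
      exact hrdvd
    · ext v
      simp only [Set.mem_setOf_eq, hgsdiv2 e hepos]
      constructor
      · intro hv
        obtain ⟨n, hnA, rfl⟩ := hPA v hv
        obtain ⟨i, hiu, hni⟩ := (hAchar n).mp hnA
        refine ⟨i, hiu, ?_⟩
        have h1 : j * gs ((p^s)^e) i ≤ n + Q * (j * gs ((p^s)^e) i + 1) := by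
          have := Nat.le_mul_of_pos_left (j * gs ((p^s)^e) i + 1) hQpos
          omega
        have h2 : n + Q * (j * gs ((p^s)^e) i + 1) ≡ n [MOD Q] := by
          show (n + Q * _) % Q = n % Q
          exact Nat.add_mul_mod_self_left n Q _
        have h3 : n + Q * (j * gs ((p^s)^e) i + 1) ≡ j * gs ((p^s)^e) i [MOD m*r] :=
          (Nat.ModEq.of_dvd ⟨Q', hQ'⟩ h2).trans hni
        obtain ⟨w, hw⟩ := (Nat.modEq_iff_dvd' h1).mp h3.symm
        refine ⟨ξ ^ (m * r * w), ⟨w, rfl⟩, ?_⟩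
        rw [← pow_mul, ← pow_add]
        apply (hxipow _ _).mpr
        have h4 : n + Q * (j * gs ((p^s)^e) i + 1) = j * gs ((p^s)^e) i + m*r*w := by
          omega
        have h5 : n ≡ n + Q * (j * gs ((p^s)^e) i + 1) [MOD Q] := h2.symm
        rwa [h4] at h5
      · rintro ⟨i, hiu, _, ⟨t, rfl⟩, rfl⟩
        have h1 : (ξ^j)^(gs ((p^s)^e) i) * ξ^(m*r*t)
            = ξ ^ (j * gs ((p^s)^e) i + m*r*t) := by
          rw [← pow_mul, ← pow_add]
        rw [h1]
        have h2 : j * gs ((p^s)^e) i + m*r*t ≡ j * gs ((p^s)^e) i [MOD m*r] := by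
          show (j * gs ((p^s)^e) i + (m*r) * t) % (m*r) = _ % (m*r)
          exact Nat.add_mul_mod_self_left _ (m*r) t
        exact (hAchar _).mpr ⟨i, hiu, h2⟩
  · intro hR
    rcases hR with hsub | hform
    · -- P is a subgroup of F^×
      apply TL.mpr
      obtain ⟨hmul, hinv⟩ := hsub
      obtain ⟨c₀, hc₀pos, hc₀Q, hc₀spec⟩ := exists_divisor (Q := Q) (T := A) hQpos hAper hA0
        (by
          intro a ha b hb
          show ξ ^ (a + b) ∈ P
          rw [pow_add]
          exact hmul _ ha _ hb)
        (by
          intro a ha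
          have hle : a + 1 ≤ Q * (a + 1) := Nat.le_mul_of_pos_left _ hQpos
          refine ⟨Q * (a + 1) - a, ?_, ⟨a + 1, by omega⟩⟩
          show ξ ^ (Q * (a+1) - a) ∈ P
          have h1 : (ξ : F) ^ (Q * (a+1) - a) * ξ ^ a = 1 := by
            rw [← pow_add]
            have h3 : Q * (a+1) - a + a = Q * (a+1) := by omega
            rw [h3, pow_mul, hxiQ1, one_pow]
          rw [eq_inv_of_mul_eq_one_left h1]
          exact hinv _ ha)
      intro k cc _
      by_cases hc : c₀ ∣ cc
      · left
        intro n hn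
        exact (hc₀spec _).mpr (Nat.dvd_add hc (Dvd.dvd.mul_left ((hc₀spec n).mp hn) _))
      · right
        intro n hn hmem
        apply hc
        have h1 := (hc₀spec _).mp hmem
        have h2 : c₀ ∣ (p^s)^k * n := Dvd.dvd.mul_left ((hc₀spec n).mp hn) _
        have := Nat.dvd_sub h1 h2
        simpa using this
    · -- P has the canonical form
      apply TL.mpr
      apply CORE.mpr
      obtain ⟨n₀, e, hepos, hem, K, hKH, hK1, hKmul, hKinv, j, hj, hdvd, hPeq⟩ := hform
      have hKne : ∀ a ∈ K, a ≠ 0 := fun a ha => SFne (hKH ha)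
      obtain ⟨cK, hcKpos, hcKQ, hKspec⟩ := exists_divisor (Q := Q)
        (T := {n : ℕ | ξ ^ n ∈ K}) hQpos
        (by
          intro n
          show ξ ^ (n + Q) ∈ K ↔ ξ ^ n ∈ K
          rw [pow_add, hxiQ1, mul_one])
        (by
          show (ξ:F) ^ 0 ∈ K
          simpa using hK1)
        (by
          intro a ha b hb
          show ξ ^ (a + b) ∈ K
          rw [pow_add]
          exact hKmul _ ha _ hb)
        (by
          intro a ha
          have hle : a + 1 ≤ Q * (a + 1) := Nat.le_mul_of_pos_left _ hQpos
          refine ⟨Q * (a + 1) - a, ?_, ⟨a + 1, by omega⟩⟩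
          show ξ ^ (Q * (a+1) - a) ∈ K
          have h1 : (ξ : F) ^ (Q * (a+1) - a) * ξ ^ a = 1 := by
            rw [← pow_add]
            have h3 : Q * (a+1) - a + a = Q * (a+1) := by omega
            rw [h3, pow_mul, hxiQ1, one_pow]
          rw [eq_inv_of_mul_eq_one_left h1]
          exact hKinv _ ha)
      have hmcK : m ∣ cK := by
        have h1 : (ξ:F) ^ cK ∈ K := (hKspec cK).mpr dvd_rfl
        exact (HXI cK).mp (hKH h1)
      obtain ⟨r, hrdef⟩ := hmcK
      have hrpos : 0 < r := by
        rcases Nat.eq_zero_or_pos r with rfl | h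
        · omega
        · exact h
      have hKeq : K = {a : F | ∃ t, a = ξ ^ (cK * t)} := by
        ext a
        constructor
        · intro ha
          obtain ⟨n, hn⟩ := hξgen a (hKne a ha)
          have h2 : cK ∣ n := (hKspec n).mp (by
            show ξ ^ n ∈ K
            rwa [hn])
          obtain ⟨t, rfl⟩ := h2
          exact ⟨t, hn.symm⟩
        · rintro ⟨t, rfl⟩
          exact (hKspec _).mpr (Dvd.intro t rfl)
      have hncK : Set.ncard K = Q / cK := by
        rw [hKeq, hQdef]
        exact ncard_pows ξ hξ0 hξgen cK hcKpos (hQdef ▸ hcKQ)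
      have hcKQ2 : cK ∣ Q := hcKQ
      obtain ⟨Q', hQ'⟩ := hcKQ
      have hQ'pos : 0 < Q' := by
        rcases Nat.eq_zero_or_pos Q' with rfl | h
        · simp at hQ'; omega
        · exact h
      have hratio : Set.ncard {a : F | scalarFrob G p a 0} / Set.ncard K = r := by
        rw [ncardH, hncK]
        have h1 : Q / m = r * Q' := by
          rw [hQ', hrdef, Nat.mul_assoc]
          exact Nat.mul_div_cancel_left _ mpos
        have h2 : Q / cK = Q' := by
          rw [hQ']
          exact Nat.mul_div_cancel_left _ hcKpos
        rw [h1, h2]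
        exact Nat.mul_div_cancel _ hQ'pos
      refine ⟨e, hepos, hem, r, hrpos, hrdef ▸ hcKQ2, j, n₀, ?_, ?_, ?_⟩
      · rw [← hgsdiv1 e]
        exact hj
      · have := hdvd
        rw [hratio, hgsdiv2 e hepos] at this
        exact this
      · intro n
        constructor
        · intro hnA
          have hv : (ξ:F) ^ n ∈ P := hnA
          rw [hPeq] at hv
          obtain ⟨i, hiu, kk, hkk, hke⟩ := hv
          rw [hKeq] at hkk
          obtain ⟨t, rfl⟩ := hkk
          refine ⟨i, hiu, ?_⟩
          rw [hgsdiv2 e hepos] at hke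
          have h1 : (ξ:F)^(j * gs ((p^s)^e) i + cK * t) = ξ ^ n := by
            rw [pow_add, pow_mul]
            exact hke.symm
          have h2 : j * gs ((p^s)^e) i + cK * t ≡ n [MOD Q] := (hxipow _ _).mp h1
          have h3 := Nat.ModEq.of_dvd ⟨Q', hQ'⟩ h2
          rw [← hrdef]
          have h4 : j * gs ((p^s)^e) i ≡ j * gs ((p^s)^e) i + cK * t [MOD cK] := by
            show _ % cK = (_ + cK * t) % cK
            exact (Nat.add_mul_mod_self_left _ cK t).symm
          exact (h4.trans h3).symm
        · rintro ⟨i, hiu, hni⟩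
          show (ξ:F) ^ n ∈ P
          rw [hPeq]
          refine ⟨i, hiu, ?_⟩
          rw [hgsdiv2 e hepos]
          rw [← hrdef] at hni
          have h1 : j * gs ((p^s)^e) i ≤ n + Q * (j * gs ((p^s)^e) i + 1) := by
            have := Nat.le_mul_of_pos_left (j * gs ((p^s)^e) i + 1) hQpos
            omega
          have h2 : n + Q * (j * gs ((p^s)^e) i + 1) ≡ n [MOD Q] := by
            show (n + Q * _) % Q = n % Q
            exact Nat.add_mul_mod_self_left n Q _
          have h3 : n + Q * (j * gs ((p^s)^e) i + 1) ≡ j * gs ((p^s)^e) i [MOD cK] :=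
            (Nat.ModEq.of_dvd ⟨Q', hQ'⟩ h2).trans hni
          obtain ⟨w, hw⟩ := (Nat.modEq_iff_dvd' h1).mp h3.symm
          refine ⟨ξ ^ (cK * w), (hKspec _).mpr (Dvd.intro w rfl), ?_⟩
          rw [← pow_mul, ← pow_add]
          apply (hxipow _ _).mpr
          have h4 : n + Q * (j * gs ((p^s)^e) i + 1) = j * gs ((p^s)^e) i + cK*w := by
            omega
          have h5 : n ≡ n + Q * (j * gs ((p^s)^e) i + 1) [MOD Q] := h2.symm
          rwa [h4] at h5
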